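/- arXiv:1208.5529 — 4 statements merged into one kernel-verified Lean document; each statement's English description precedes it below -/
import Mathlib

section
/- If x ∈ C²([a,b],ℝ) is a minimizer of the functional J[x] = ∫_a^b L(t, x(t), ẋ(t)) dt among all functions in C²([a,b],ℝ) satisfying x(a) = A and x(b) = B, then x satisfies the DuBois–Reymond condition: ∂L/∂t (t, x(t), ẋ(t)) = d/dt { L(t, x(t), ẋ(t)) − ∂L/∂ẋ (t, x(t), ẋ(t)) · ẋ(t) } for all t ∈ [a,b]. -/
open Set MeasureTheory intervalIntegral


private lemma dbr_curve (hab : a < b) {x : ℝ → ℝ} (hx : ContDiffOn ℝ 2 x (Set.Icc a b)) :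
    ContDiffOn ℝ 1 (fun t => (t, x t, derivWithin x (Set.Icc a b) t)) (Set.Icc a b) := by
  refine ContDiffOn.prodMk contDiffOn_id (ContDiffOn.prodMk (hx.of_le one_le_two) ?_)
  exact hx.derivWithin (uniqueDiffOn_Icc hab) (by norm_num)

private lemma dbr_slot3 {L : ℝ → ℝ → ℝ → ℝ}
    (hL : ContDiff ℝ 2 (fun p : ℝ × ℝ × ℝ => L p.1 p.2.1 p.2.2)) (s x₀ v₀ : ℝ) :
    deriv (fun v => L s x₀ v) v₀
      = fderiv ℝ (fun p : ℝ × ℝ × ℝ => L p.1 p.2.1 p.2.2) (s, x₀, v₀) (0, 0, 1) := by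
  have h1 : HasDerivAt (fun v : ℝ => (s, x₀, v)) ((0 : ℝ), (0 : ℝ), (1 : ℝ)) v₀ :=
    (hasDerivAt_const v₀ s).prodMk ((hasDerivAt_const v₀ x₀).prodMk (hasDerivAt_id v₀))
  have h2 := ((hL.differentiable two_ne_zero) (s, x₀, v₀)).hasFDerivAt.comp_hasDerivAt v₀ h1
  exact h2.deriv

private lemma dbr_slot1 {L : ℝ → ℝ → ℝ → ℝ}
    (hL : ContDiff ℝ 2 (fun p : ℝ × ℝ × ℝ => L p.1 p.2.1 p.2.2)) (s₀ x₀ v₀ : ℝ) :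
    deriv (fun s => L s x₀ v₀) s₀
      = fderiv ℝ (fun p : ℝ × ℝ × ℝ => L p.1 p.2.1 p.2.2) (s₀, x₀, v₀) (1, 0, 0) := by
  have h1 : HasDerivAt (fun s : ℝ => (s, x₀, v₀)) ((1 : ℝ), (0 : ℝ), (0 : ℝ)) s₀ :=
    (hasDerivAt_id s₀).prodMk ((hasDerivAt_const s₀ x₀).prodMk (hasDerivAt_const s₀ v₀))
  have h2 := ((hL.differentiable two_ne_zero) (s₀, x₀, v₀)).hasFDerivAt.comp_hasDerivAt s₀ h1
  exact h2.deriv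

-- decomposition of fderiv applied to a general vector
private lemma dbr_fderiv_apply0 {L : ℝ → ℝ → ℝ → ℝ}
    (hL : ContDiff ℝ 2 (fun p : ℝ × ℝ × ℝ => L p.1 p.2.1 p.2.2)) (p : ℝ × ℝ × ℝ) (v : ℝ × ℝ × ℝ) :
    fderiv ℝ (fun p : ℝ × ℝ × ℝ => L p.1 p.2.1 p.2.2) p v
      = v.1 * fderiv ℝ (fun p : ℝ × ℝ × ℝ => L p.1 p.2.1 p.2.2) p (1,0,0)
        + v.2.1 * fderiv ℝ (fun p : ℝ × ℝ × ℝ => L p.1 p.2.1 p.2.2) p (0,1,0)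
        + v.2.2 * fderiv ℝ (fun p : ℝ × ℝ × ℝ => L p.1 p.2.1 p.2.2) p (0,0,1) := by
  have hv : v = v.1 • ((1:ℝ),(0:ℝ),(0:ℝ)) + v.2.1 • ((0:ℝ),(1:ℝ),(0:ℝ))
      + v.2.2 • ((0:ℝ),(0:ℝ),(1:ℝ)) := by
    simp [Prod.ext_iff]
  conv_lhs => rw [hv]
  rw [map_add, map_add, _root_.map_smul, _root_.map_smul, _root_.map_smul, smul_eq_mul, smul_eq_mul, smul_eq_mul]

private lemma dbr_fderiv_apply' {L : ℝ → ℝ → ℝ → ℝ} (p : ℝ × ℝ × ℝ) (v : ℝ × ℝ × ℝ) :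
    fderiv ℝ (fun p : ℝ × ℝ × ℝ => L p.1 p.2.1 p.2.2) p v
      = v.1 * fderiv ℝ (fun p : ℝ × ℝ × ℝ => L p.1 p.2.1 p.2.2) p (1,0,0)
        + v.2.1 * fderiv ℝ (fun p : ℝ × ℝ × ℝ => L p.1 p.2.1 p.2.2) p (0,1,0)
        + v.2.2 * fderiv ℝ (fun p : ℝ × ℝ × ℝ => L p.1 p.2.1 p.2.2) p (0,0,1) := by
  have hv : v = v.1 • ((1:ℝ),(0:ℝ),(0:ℝ)) + v.2.1 • ((0:ℝ),(1:ℝ),(0:ℝ))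
      + v.2.2 • ((0:ℝ),(0:ℝ),(1:ℝ)) := by
    simp [Prod.ext_iff]
  conv_lhs => rw [hv]
  rw [map_add, map_add, _root_.map_smul, _root_.map_smul, _root_.map_smul,
    smul_eq_mul, smul_eq_mul, smul_eq_mul]

private lemma dbr_var {a b A B : ℝ} (hab : a < b)
    {L : ℝ → ℝ → ℝ → ℝ}
    (hL : ContDiff ℝ 2 (fun p : ℝ × ℝ × ℝ => L p.1 p.2.1 p.2.2))
    {x : ℝ → ℝ} (hx : ContDiffOn ℝ 2 x (Set.Icc a b))
    (hxa : x a = A) (hxb : x b = B)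
    (hmin : ∀ y : ℝ → ℝ, ContDiffOn ℝ 2 y (Set.Icc a b) → y a = A → y b = B →
      (∫ t in a..b, L t (x t) (derivWithin x (Set.Icc a b) t))
        ≤ ∫ t in a..b, L t (y t) (derivWithin y (Set.Icc a b) t))
    (η : ℝ → ℝ) (hη : ContDiff ℝ (⊤ : ℕ∞) η) (hηa : η a = 0) (hηb : η b = 0) :
    (∫ t in a..b,
        (fderiv ℝ (fun p : ℝ × ℝ × ℝ => L p.1 p.2.1 p.2.2)
            (t, x t, derivWithin x (Set.Icc a b) t) (0,1,0) * η t
         + fderiv ℝ (fun p : ℝ × ℝ × ℝ => L p.1 p.2.1 p.2.2)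
            (t, x t, derivWithin x (Set.Icc a b) t) (0,0,1) * deriv η t)) = 0 := by
  set I : Set ℝ := Set.Icc a b with hI
  set Lf : ℝ × ℝ × ℝ → ℝ := fun p => L p.1 p.2.1 p.2.2 with hLf
  set u : ℝ → ℝ := derivWithin x I with hu
  set c : ℝ → ℝ × ℝ × ℝ := fun t => (t, x t, u t) with hc
  set w : ℝ → ℝ × ℝ × ℝ := fun t => ((0:ℝ), η t, deriv η t) with hw
  have hUD : UniqueDiffOn ℝ I := uniqueDiffOn_Icc hab
  have hIoc : Set.uIoc a b = Set.Ioc a b := uIoc_of_le hab.le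
  have hIcc : Set.uIcc a b = I := uIcc_of_le hab.le
  -- continuity facts
  have hηc : Continuous η := hη.continuous
  have hη' : Continuous (deriv η) := hη.continuous_deriv (by exact_mod_cast le_top)
  have hwc : Continuous w := continuous_const.prodMk (hηc.prodMk hη')
  have hxc : ContinuousOn x I := hx.continuousOn
  have huc1 : ContDiffOn ℝ 1 u I := hx.derivWithin hUD (by norm_num)
  have huc : ContinuousOn u I := huc1.continuousOn
  have hcc : ContinuousOn c I := continuousOn_id.prodMk (hxc.prodMk huc)
  have hLfc : Continuous Lf := hL.continuous
  have hDLc : Continuous (fderiv ℝ Lf) := ((hL.fderiv_right (m := 1) (by norm_num)).continuous)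
  -- the parametrized integrand
  set F : ℝ → ℝ → ℝ := fun ε t => Lf (c t + ε • w t) with hF
  set D : ℝ → ℝ → ℝ := fun ε t => fderiv ℝ Lf (c t + ε • w t) (w t) with hD
  have hFm : ∀ ε : ℝ, ContinuousOn (F ε) I := fun ε => by
    exact hLfc.comp_continuousOn (hcc.add ((hwc.const_smul ε).continuousOn))
  have hDm : ∀ ε : ℝ, ContinuousOn (D ε) I := fun ε => by
    refine ContinuousOn.clm_apply ?_ hwc.continuousOn
    exact hDLc.comp_continuousOn (hcc.add ((hwc.const_smul ε).continuousOn))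
  have hmeas : ∀ f : ℝ → ℝ, ContinuousOn f I →
      AEStronglyMeasurable f (volume.restrict (Set.uIoc a b)) := by
    intro f hf
    rw [hIoc]
    exact (hf.mono Ioc_subset_Icc_self).aestronglyMeasurable measurableSet_Ioc
  -- the bound
  obtain ⟨M, hM⟩ : ∃ M, ∀ q ∈ (Metric.closedBall (0:ℝ) 1) ×ˢ I,
      ‖fderiv ℝ Lf (c q.2 + q.1 • w q.2) (w q.2)‖ ≤ M := by
    apply ((isCompact_closedBall _ _).prod isCompact_Icc).exists_bound_of_continuousOn
    refine ContinuousOn.clm_apply ?_ (hwc.comp continuous_snd).continuousOn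
    refine hDLc.comp_continuousOn ?_
    refine ContinuousOn.add (hcc.comp continuousOn_snd (fun q hq => hq.2)) ?_
    exact (continuousOn_fst.smul ((hwc.comp continuous_snd).continuousOn))
  -- differentiation under the integral sign
  have hder : ∀ t ∈ I, ∀ ε : ℝ, HasDerivAt (fun e => F e t) (D ε t) ε := by
    intro t ht ε
    have haff : HasDerivAt (fun e : ℝ => c t + e • w t) (w t) ε := by
      simpa using ((hasDerivAt_id ε).smul_const (w t)).const_add (c t)
    exact ((hL.differentiable two_ne_zero) _).hasFDerivAt.comp_hasDerivAt ε haff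
  have key := intervalIntegral.hasDerivAt_integral_of_dominated_loc_of_deriv_le
    (F := F) (F' := D) (x₀ := (0:ℝ)) (bound := fun _ => M) (μ := volume)
    (a := a) (b := b) (Metric.ball_mem_nhds 0 one_pos)
    (Filter.Eventually.of_forall fun ε => hmeas _ (hFm ε))
    (((hFm 0).mono (hIcc ▸ uIcc_subset_uIcc_left (by simp))).intervalIntegrable)
    (hmeas _ (hDm 0))
    (Filter.Eventually.of_forall ?_) ?_ (Filter.Eventually.of_forall ?_)
  rotate_left
  · intro t ht ε hε
    have ht' : t ∈ I := Ioc_subset_Icc_self (hIoc ▸ ht)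
    exact hM (ε, t) ⟨Metric.ball_subset_closedBall hε, ht'⟩
  · exact intervalIntegrable_const
  · intro t ht ε _
    exact hder t (Ioc_subset_Icc_self (hIoc ▸ ht)) ε
  obtain ⟨-, hG⟩ := key
  -- the function ε ↦ J[x + ε η] has a minimum at 0
  have hmin0 : ∀ ε : ℝ, (∫ t in a..b, F 0 t) ≤ ∫ t in a..b, F ε t := by
    intro ε
    have h0 : (∫ t in a..b, F 0 t) = ∫ t in a..b, L t (x t) (derivWithin x I t) := by
      refine intervalIntegral.integral_congr fun t ht => ?_
      simp [hF, hLf, hc, hu]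
    set y : ℝ → ℝ := fun t => x t + ε * η t with hy
    have hyC : ContDiffOn ℝ 2 y I := hx.add ((contDiff_const.mul hη).of_le (by norm_cast)).contDiffOn
    have hyder : ∀ t ∈ I, derivWithin y I t = u t + ε * deriv η t := by
      intro t ht
      have h1 : HasDerivWithinAt x (u t) I t :=
        ((hx.differentiableOn (by norm_num)) t ht).hasDerivWithinAt
      have h2 : HasDerivWithinAt (fun s => ε * η s) (ε * deriv η t) I t :=
        ((hη.differentiable (by simp) t).hasDerivAt.const_mul ε).hasDerivWithinAt
      exact (h1.add h2).derivWithin (hUD t ht)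
    have hε' : (∫ t in a..b, F ε t) = ∫ t in a..b, L t (y t) (derivWithin y I t) := by
      refine intervalIntegral.integral_congr fun t ht => ?_
      rw [hIcc] at ht
      have : c t + ε • w t = (t, y t, u t + ε * deriv η t) := by
        simp [hc, hw, hy, Prod.ext_iff]
      rw [hF]
      simp only [this, hLf]
      rw [hyder t ht]
    rw [h0, hε']
    exact hmin y hyC (by simp [hy, hxa, hηa]) (by simp [hy, hxb, hηb])
  have hloc : IsLocalMin (fun ε => ∫ t in a..b, F ε t) 0 :=
    Filter.Eventually.of_forall hmin0
  have hd0 : (∫ t in a..b, D 0 t) = 0 := by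
    have := hloc.deriv_eq_zero
    rwa [hG.deriv] at this
  have hcg : (∫ t in a..b,
        (fderiv ℝ Lf (t, x t, u t) (0,1,0) * η t
          + fderiv ℝ Lf (t, x t, u t) (0,0,1) * deriv η t))
      = ∫ t in a..b, D 0 t := by
    refine intervalIntegral.integral_congr fun t ht => ?_
    have h0 : c t + (0:ℝ) • w t = c t := by simp
    rw [hD]
    simp only [h0]
    rw [dbr_fderiv_apply' (L := L) (c t) (w t)]
    simp only [hw, hc, hLf]
    ring
  rw [hcg]
  exact hd0

private lemma dbr_vanish {a b : ℝ} (hab : a < b) {h : ℝ → ℝ}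
    (hh : ContinuousOn h (Set.Icc a b))
    (hint : ∀ η : ℝ → ℝ, ContDiff ℝ (⊤ : ℕ∞) η → η a = 0 → η b = 0 →
      (∫ t in a..b, h t * η t) = 0) :
    ∀ t ∈ Set.Ioo a b, h t = 0 := by
  have claim : ∀ h : ℝ → ℝ, ContinuousOn h (Set.Icc a b) →
      (∀ η : ℝ → ℝ, ContDiff ℝ (⊤ : ℕ∞) η → η a = 0 → η b = 0 → (∫ t in a..b, h t * η t) = 0) →
      ∀ t0 ∈ Set.Ioo a b, ¬ (0 < h t0) := by
    intro h hh hint t0 ht0 hpos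
    -- find δ
    have hcont : ContinuousAt h t0 :=
      (hh t0 (Ioo_subset_Icc_self ht0)).continuousAt
        (Icc_mem_nhds ht0.1 ht0.2)
    obtain ⟨δ₁, hδ₁, hball⟩ : ∃ δ > 0, ∀ s ∈ Metric.ball t0 δ, h t0 / 2 < h s := by
      have : {s | h t0 / 2 < h s} ∈ nhds t0 :=
        hcont.preimage_mem_nhds (Ioi_mem_nhds (by linarith))
      obtain ⟨δ, hδ, hsub⟩ := Metric.mem_nhds_iff.mp this
      exact ⟨δ, hδ, fun s hs => hsub hs⟩
    set δ : ℝ := min δ₁ (min ((t0 - a)/2) ((b - t0)/2)) with hδdef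
    have hδ : 0 < δ := by
      refine lt_min hδ₁ (lt_min (by linarith [ht0.1]) (by linarith [ht0.2]))
    have hac1 : a < t0 - δ := by
      have : δ ≤ (t0 - a)/2 := (min_le_right _ _).trans (min_le_left _ _)
      linarith [ht0.1]
    have hc2b : t0 + δ < b := by
      have : δ ≤ (b - t0)/2 := (min_le_right _ _).trans (min_le_right _ _)
      linarith [ht0.2]
    have hδδ₁ : δ ≤ δ₁ := min_le_left _ _
    -- the bump function
    set f : ContDiffBump t0 := ⟨δ/2, δ, by positivity, by linarith⟩ with hf
    have hηC : ContDiff ℝ (⊤ : ℕ∞) (f : ℝ → ℝ) := f.contDiff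
    have hηa : (f : ℝ → ℝ) a = 0 := f.zero_of_le_dist (by
      rw [Real.dist_eq, abs_of_nonpos (by linarith)]; simp [hf]; linarith)
    have hηb : (f : ℝ → ℝ) b = 0 := f.zero_of_le_dist (by
      rw [Real.dist_eq, abs_of_nonneg (by linarith)]; simp [hf]; linarith)
    have h0 := hint f hηC hηa hηb
    set c1 := t0 - δ with hc1def
    set c2 := t0 + δ with hc2def
    have hsub1 : Set.uIcc a c1 ⊆ Set.Icc a b := by
      rw [uIcc_of_le (by linarith)]; exact Icc_subset_Icc le_rfl (by linarith)
    have hsub2 : Set.uIcc c1 c2 ⊆ Set.Icc a b := by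
      rw [uIcc_of_le (by linarith)]; exact Icc_subset_Icc (by linarith) (by linarith)
    have hsub3 : Set.uIcc c2 b ⊆ Set.Icc a b := by
      rw [uIcc_of_le (by linarith)]; exact Icc_subset_Icc (by linarith) le_rfl
    have hintg : ∀ s t : ℝ, Set.uIcc s t ⊆ Set.Icc a b →
        IntervalIntegrable (fun t => h t * (f : ℝ → ℝ) t) volume s t := by
      intro s t hsub
      exact ((hh.mono hsub).mul (f.continuous.continuousOn)).intervalIntegrable
    have hzero1 : (∫ t in a..c1, h t * (f : ℝ → ℝ) t) = 0 := by
      rw [← intervalIntegral.integral_zero (a := a) (b := c1)]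
      refine intervalIntegral.integral_congr fun s hs => ?_
      rw [uIcc_of_le (by linarith)] at hs
      have : (f : ℝ → ℝ) s = 0 := f.zero_of_le_dist (by
        rw [Real.dist_eq, abs_of_nonpos (by linarith [hs.2])]; simp [hf]; linarith [hs.2])
      simp [this]
    have hzero3 : (∫ t in c2..b, h t * (f : ℝ → ℝ) t) = 0 := by
      rw [← intervalIntegral.integral_zero (a := c2) (b := b)]
      refine intervalIntegral.integral_congr fun s hs => ?_
      rw [uIcc_of_le (by linarith)] at hs
      have : (f : ℝ → ℝ) s = 0 := f.zero_of_le_dist (by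
        rw [Real.dist_eq, abs_of_nonneg (by linarith [hs.1])]; simp [hf]; linarith [hs.1])
      simp [this]
    have hmid : 0 < ∫ t in c1..c2, h t * (f : ℝ → ℝ) t := by
      refine intervalIntegral_pos_of_pos_on (hintg c1 c2 hsub2) ?_ (by linarith)
      intro s hs
      have hsball : s ∈ Metric.ball t0 δ := by
        rw [Real.ball_eq_Ioo]; exact hs
      have h1 : h t0 / 2 < h s := hball s (Metric.ball_subset_ball hδδ₁ hsball)
      have h2 : 0 < (f : ℝ → ℝ) s := f.pos_of_mem_ball hsball
      have : 0 < h s := lt_trans (by linarith) h1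
      positivity
    have hsplit : (∫ t in a..c1, h t * (f : ℝ → ℝ) t) + (∫ t in c1..c2, h t * (f : ℝ → ℝ) t)
        + (∫ t in c2..b, h t * (f : ℝ → ℝ) t) = ∫ t in a..b, h t * (f : ℝ → ℝ) t := by
      rw [intervalIntegral.integral_add_adjacent_intervals (hintg a c1 hsub1) (hintg c1 c2 hsub2)]
      exact intervalIntegral.integral_add_adjacent_intervals
        (by refine (hintg a c2 ?_); rw [uIcc_of_le (by linarith)];
            exact Icc_subset_Icc le_rfl (by linarith))
        (hintg c2 b hsub3)
    rw [h0, hzero1, hzero3] at hsplit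
    simp at hsplit
    linarith
  intro t ht
  by_contra hne
  rcases (lt_or_gt_of_ne hne) with hlt | hgt
  · have hneg' : ∀ η : ℝ → ℝ, ContDiff ℝ (⊤ : ℕ∞) η → η a = 0 → η b = 0 →
        (∫ s in a..b, -h s * η s) = 0 := by
      intro η hη hηa hηb
      have := hint η hη hηa hηb
      have h2 : (∫ s in a..b, -h s * η s) = - ∫ s in a..b, h s * η s := by
        rw [← intervalIntegral.integral_neg]
        exact intervalIntegral.integral_congr fun s _ => by ring
      rw [h2, this, neg_zero]
    exact claim (fun s => -h s) hh.neg hneg' t ht (show (0:ℝ) < -(h t) by linarith)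
  · exact claim h hh hint t ht hgt
private lemma dbr_ibp {a b : ℝ} {g η : ℝ → ℝ} (hab : a < b)
    (hg : ContDiffOn ℝ 1 g (Set.Icc a b))
    (hη : ContDiff ℝ (⊤ : ℕ∞) η) (hηa : η a = 0) (hηb : η b = 0) :
    (∫ t in a..b, (derivWithin g (Set.Icc a b) t * η t + g t * deriv η t)) = 0 := by
  have hUD : UniqueDiffOn ℝ (Set.Icc a b) := uniqueDiffOn_Icc hab
  have hIcc : Set.uIcc a b = Set.Icc a b := uIcc_of_le hab.le
  have hg' : ContinuousOn (derivWithin g (Set.Icc a b)) (Set.Icc a b) :=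
    hg.continuousOn_derivWithin hUD le_rfl
  have hcont : ContinuousOn (fun t => g t * η t) (Set.Icc a b) :=
    hg.continuousOn.mul hη.continuous.continuousOn
  have hderiv : ∀ t ∈ Set.Ioo a b, HasDerivWithinAt (fun t => g t * η t)
      (derivWithin g (Set.Icc a b) t * η t + g t * deriv η t) (Set.Ioi t) t := by
    intro t ht
    have h1 : HasDerivAt g (derivWithin g (Set.Icc a b) t) t :=
      ((hg.differentiableOn one_ne_zero t (Ioo_subset_Icc_self ht)).hasDerivWithinAt).hasDerivAt
        (Icc_mem_nhds ht.1 ht.2)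
    have h2 : HasDerivAt η (deriv η t) t :=
      (hη.differentiable (by simp) t).hasDerivAt
    exact (h1.mul h2).hasDerivWithinAt
  have hii : IntervalIntegrable
      (fun t => derivWithin g (Set.Icc a b) t * η t + g t * deriv η t) volume a b := by
    apply ContinuousOn.intervalIntegrable
    rw [hIcc]
    exact (hg'.mul hη.continuous.continuousOn).add
      (hg.continuousOn.mul (hη.continuous_deriv (by exact_mod_cast le_top)).continuousOn)
  have := intervalIntegral.integral_eq_sub_of_hasDeriv_right_of_le hab.le hcont hderiv hii
  rw [this, hηa, hηb]
  ring

private lemma dbr_EL {a b A B : ℝ} (hab : a < b)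
    {L : ℝ → ℝ → ℝ → ℝ}
    (hL : ContDiff ℝ 2 (fun p : ℝ × ℝ × ℝ => L p.1 p.2.1 p.2.2))
    {x : ℝ → ℝ} (hx : ContDiffOn ℝ 2 x (Set.Icc a b))
    (hxa : x a = A) (hxb : x b = B)
    (hmin : ∀ y : ℝ → ℝ, ContDiffOn ℝ 2 y (Set.Icc a b) → y a = A → y b = B →
      (∫ t in a..b, L t (x t) (derivWithin x (Set.Icc a b) t))
        ≤ ∫ t in a..b, L t (y t) (derivWithin y (Set.Icc a b) t)) :
    ∀ t ∈ Set.Icc a b,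
      derivWithin (fun s => fderiv ℝ (fun p : ℝ × ℝ × ℝ => L p.1 p.2.1 p.2.2)
          (s, x s, derivWithin x (Set.Icc a b) s) (0,0,1)) (Set.Icc a b) t
        = fderiv ℝ (fun p : ℝ × ℝ × ℝ => L p.1 p.2.1 p.2.2)
            (t, x t, derivWithin x (Set.Icc a b) t) (0,1,0) := by
  set I : Set ℝ := Set.Icc a b with hI
  set Lf : ℝ × ℝ × ℝ → ℝ := fun p => L p.1 p.2.1 p.2.2 with hLf
  set u : ℝ → ℝ := derivWithin x I with hu
  set g : ℝ → ℝ := fun s => fderiv ℝ Lf (s, x s, u s) ((0:ℝ),(0:ℝ),(1:ℝ)) with hg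
  set L2 : ℝ → ℝ := fun s => fderiv ℝ Lf (s, x s, u s) ((0:ℝ),(1:ℝ),(0:ℝ)) with hL2
  have hUD : UniqueDiffOn ℝ I := uniqueDiffOn_Icc hab
  have hcC1 : ContDiffOn ℝ 1 (fun t => (t, x t, u t)) I := dbr_curve hab hx
  have hDL : ContDiff ℝ 1 (fderiv ℝ Lf) := hL.fderiv_right (m := 1) (by norm_num)
  have hgC1 : ContDiffOn ℝ 1 g I :=
    ContDiffOn.clm_apply (hDL.comp_contDiffOn hcC1) contDiffOn_const
  have hL2C1 : ContDiffOn ℝ 1 L2 I :=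
    ContDiffOn.clm_apply (hDL.comp_contDiffOn hcC1) contDiffOn_const
  have hg' : ContinuousOn (derivWithin g I) I := hgC1.continuousOn_derivWithin hUD le_rfl
  -- the weak form
  have hweak : ∀ t ∈ Set.Ioo a b, L2 t - derivWithin g I t = 0 := by
    refine dbr_vanish hab (hL2C1.continuousOn.sub hg') ?_
    intro η hη hηa hηb
    have h1 := dbr_var hab hL hx hxa hxb hmin η hη hηa hηb
    have h2 := dbr_ibp hab hgC1 hη hηa hηb
    have hi1 : IntervalIntegrable (fun t => L2 t * η t + g t * deriv η t) volume a b := by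
      apply ContinuousOn.intervalIntegrable
      rw [uIcc_of_le hab.le]
      exact (hL2C1.continuousOn.mul hη.continuous.continuousOn).add
        (hgC1.continuousOn.mul (hη.continuous_deriv (by exact_mod_cast le_top)).continuousOn)
    have hi2 : IntervalIntegrable
        (fun t => derivWithin g I t * η t + g t * deriv η t) volume a b := by
      apply ContinuousOn.intervalIntegrable
      rw [uIcc_of_le hab.le]
      exact (hg'.mul hη.continuous.continuousOn).add
        (hgC1.continuousOn.mul (hη.continuous_deriv (by exact_mod_cast le_top)).continuousOn)
    have h1' : (∫ t in a..b, (L2 t * η t + g t * deriv η t)) = 0 := by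
      rw [← h1]
    calc (∫ t in a..b, (L2 t - derivWithin g I t) * η t)
        = (∫ t in a..b, ((L2 t * η t + g t * deriv η t)
            - (derivWithin g I t * η t + g t * deriv η t))) :=
          intervalIntegral.integral_congr fun t _ => by ring
      _ = (∫ t in a..b, (L2 t * η t + g t * deriv η t))
            - ∫ t in a..b, (derivWithin g I t * η t + g t * deriv η t) :=
          intervalIntegral.integral_sub hi1 hi2
      _ = 0 := by rw [h1', h2, sub_zero]
  -- extend to the closed interval by continuity
  intro t ht
  have hφ : ContinuousOn (fun s => L2 s - derivWithin g I s) I := hL2C1.continuousOn.sub hg'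
  have hclos : t ∈ closure (Set.Ioo a b) := by rw [closure_Ioo hab.ne]; exact ht
  have hne : (nhdsWithin t (Set.Ioo a b)).NeBot := mem_closure_iff_nhdsWithin_neBot.mp hclos
  have h1 : Filter.Tendsto (fun s => L2 s - derivWithin g I s) (nhdsWithin t (Set.Ioo a b))
      (nhds (L2 t - derivWithin g I t)) :=
    ((hφ t ht).mono Ioo_subset_Icc_self).tendsto
  have h2 : Filter.Tendsto (fun s => L2 s - derivWithin g I s) (nhdsWithin t (Set.Ioo a b))
      (nhds 0) := by
    refine Filter.Tendsto.congr' ?_ tendsto_const_nhds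
    exact Filter.eventually_of_mem self_mem_nhdsWithin fun s hs => (hweak s hs).symm
  have h3 : L2 t - derivWithin g I t = 0 := tendsto_nhds_unique h1 h2
  have : derivWithin g I t = L2 t := by linarith
  exact this

/-- **DuBois–Reymond necessary condition.**
If `x ∈ C²([a,b],ℝ)` minimizes `J[x] = ∫_a^b L(t, x(t), ẋ(t)) dt` among all
`C²` functions satisfying the boundary conditions `x(a) = A`, `x(b) = B`,
where `L` is `C²` in all its arguments, then `x` satisfies the
DuBois–Reymond condition
`∂L/∂t (t,x(t),ẋ(t)) = d/dt { L(t,x(t),ẋ(t)) - ∂L/∂ẋ (t,x(t),ẋ(t))·ẋ(t) }`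
for all `t ∈ [a,b]`. -/
theorem duBois_reymond_condition
    (a b A B : ℝ) (hab : a < b)
    (L : ℝ → ℝ → ℝ → ℝ)
    (hL : ContDiff ℝ 2 (fun p : ℝ × ℝ × ℝ => L p.1 p.2.1 p.2.2))
    (x : ℝ → ℝ) (hx : ContDiffOn ℝ 2 x (Set.Icc a b))
    (hxa : x a = A) (hxb : x b = B)
    (hmin : ∀ y : ℝ → ℝ, ContDiffOn ℝ 2 y (Set.Icc a b) → y a = A → y b = B →
      (∫ t in a..b, L t (x t) (derivWithin x (Set.Icc a b) t))
        ≤ ∫ t in a..b, L t (y t) (derivWithin y (Set.Icc a b) t)) :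
    ∀ t ∈ Set.Icc a b,
      deriv (fun s => L s (x t) (derivWithin x (Set.Icc a b) t)) t
        = derivWithin
            (fun s => L s (x s) (derivWithin x (Set.Icc a b) s)
              - deriv (fun v => L s (x s) v) (derivWithin x (Set.Icc a b) s)
                  * derivWithin x (Set.Icc a b) s)
            (Set.Icc a b) t := by
  intro t ht
  set I : Set ℝ := Set.Icc a b with hI
  set Lf : ℝ × ℝ × ℝ → ℝ := fun p => L p.1 p.2.1 p.2.2 with hLf
  set u : ℝ → ℝ := derivWithin x I with hu
  set g : ℝ → ℝ := fun s => fderiv ℝ Lf (s, x s, u s) ((0:ℝ),(0:ℝ),(1:ℝ)) with hg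
  have hUD : UniqueDiffOn ℝ I := uniqueDiffOn_Icc hab
  have hcC1 : ContDiffOn ℝ 1 (fun t => (t, x t, u t)) I := dbr_curve hab hx
  have hDL : ContDiff ℝ 1 (fderiv ℝ Lf) := hL.fderiv_right (m := 1) (by norm_num)
  have hgC1 : ContDiffOn ℝ 1 g I :=
    ContDiffOn.clm_apply (hDL.comp_contDiffOn hcC1) contDiffOn_const
  have huC1 : ContDiffOn ℝ 1 u I := hx.derivWithin hUD (by norm_num)
  -- rewrite the function under derivWithin
  have hfun : (fun s => L s (x s) (derivWithin x I s)
        - deriv (fun v => L s (x s) v) (derivWithin x I s) * derivWithin x I s)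
      = fun s => Lf (s, x s, u s) - g s * u s := by
    funext s
    rw [dbr_slot3 hL s (x s) (u s)]
  rw [hfun]
  -- derivatives
  have hxd : HasDerivWithinAt x (u t) I t :=
    ((hx.differentiableOn (by norm_num)) t ht).hasDerivWithinAt
  have hud : HasDerivWithinAt u (derivWithin u I t) I t :=
    ((huC1.differentiableOn one_ne_zero) t ht).hasDerivWithinAt
  have hgd : HasDerivWithinAt g (derivWithin g I t) I t :=
    ((hgC1.differentiableOn one_ne_zero) t ht).hasDerivWithinAt
  have hcd : HasDerivWithinAt (fun s => ((s : ℝ), x s, u s))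
      ((1:ℝ), u t, derivWithin u I t) I t :=
    (hasDerivWithinAt_id t I).prodMk (hxd.prodMk hud)
  have hcomp : HasDerivWithinAt (fun s => Lf (s, x s, u s))
      (fderiv ℝ Lf (t, x t, u t) ((1:ℝ), u t, derivWithin u I t)) I t :=
    ((hL.differentiable two_ne_zero) _).hasFDerivAt.comp_hasDerivWithinAt t hcd
  have hprod : HasDerivWithinAt (fun s => g s * u s)
      (derivWithin g I t * u t + g t * derivWithin u I t) I t := hgd.mul hud
  have htot := (hcomp.sub hprod).derivWithin (hUD t ht)
  rw [show derivWithin (fun s => Lf (s, x s, u s) - g s * u s) I t = _ from htot]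
  -- Euler--Lagrange
  have hEL := dbr_EL hab hL hx hxa hxb hmin t ht
  rw [dbr_fderiv_apply0 hL (t, x t, u t) ((1:ℝ), u t, derivWithin u I t)]
  rw [dbr_slot1 hL t (x t) (u t)]
  simp only [hg]
  rw [hEL]
  ring
end

section
/- Suppose the functional J[x] = ∫_a^b L(t, x(t), ẋ(t)) dt is invariant under the one-parameter family of infinitesimal transformations with C¹ generators T and X. Then, along every x ∈ C²([a,b],ℝ) satisfying the Euler–Lagrange equation L_x(t,x(t),ẋ(t)) = d/dt [L_ẋ(t,x(t),ẋ(t))], the quantity ∂L/∂ẋ (t, x(t), ẋ(t)) · X(t, x(t)) + ( L(t, x(t), ẋ(t)) − ∂L/∂ẋ (t, x(t), ẋ(t)) · ẋ(t) ) · T(t, x(t)) is constant on [a,b] (Noether's theorem: invariance yields a conservation law). -/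
open Set

lemma clm_apply_decomp (D : (ℝ×ℝ×ℝ) →L[ℝ] ℝ) (d₁ d₂ d₃ : ℝ) :
    D (d₁,d₂,d₃) = d₁ * D (1,0,0) + d₂ * D (0,1,0) + d₃ * D (0,0,1) := by
  have h : (d₁,d₂,d₃) = d₁ • ((1:ℝ),(0:ℝ),(0:ℝ)) + d₂ • ((0:ℝ),(1:ℝ),(0:ℝ))
      + d₃ • ((0:ℝ),(0:ℝ),(1:ℝ)) := by
    simp [Prod.ext_iff]
  rw [h, map_add, map_add, map_smul, map_smul, map_smul]
  simp [smul_eq_mul]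

lemma clm_apply_decomp' (D : (ℝ×ℝ×ℝ) →L[ℝ] ((ℝ×ℝ×ℝ) →L[ℝ] ℝ)) (d₁ d₂ d₃ : ℝ) (v : ℝ×ℝ×ℝ) :
    D (d₁,d₂,d₃) v = d₁ * D (1,0,0) v + d₂ * D (0,1,0) v + d₃ * D (0,0,1) v := by
  have h : (d₁,d₂,d₃) = d₁ • ((1:ℝ),(0:ℝ),(0:ℝ)) + d₂ • ((0:ℝ),(1:ℝ),(0:ℝ))
      + d₃ • ((0:ℝ),(0:ℝ),(1:ℝ)) := by
    simp [Prod.ext_iff]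
  rw [h, map_add, map_add, map_smul, map_smul, map_smul]
  simp [smul_eq_mul]

/-- chain rule for a curve into ℝ³ composed with scalar function -/
lemma hasDerivAt_comp3 {F : ℝ×ℝ×ℝ → ℝ} {γ₁ γ₂ γ₃ : ℝ → ℝ} {d₁ d₂ d₃ t : ℝ}
    (hF : DifferentiableAt ℝ F (γ₁ t, γ₂ t, γ₃ t))
    (h₁ : HasDerivAt γ₁ d₁ t) (h₂ : HasDerivAt γ₂ d₂ t) (h₃ : HasDerivAt γ₃ d₃ t) :
    HasDerivAt (fun s => F (γ₁ s, γ₂ s, γ₃ s))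
      (d₁ * fderiv ℝ F (γ₁ t, γ₂ t, γ₃ t) (1,0,0)
       + d₂ * fderiv ℝ F (γ₁ t, γ₂ t, γ₃ t) (0,1,0)
       + d₃ * fderiv ℝ F (γ₁ t, γ₂ t, γ₃ t) (0,0,1)) t := by
  have h := hF.hasFDerivAt.comp_hasDerivAt t (h₁.prodMk (h₂.prodMk h₃))
  rwa [clm_apply_decomp] at h

lemma hasDerivWithinAt_comp3 {F : ℝ×ℝ×ℝ → ℝ} {γ₁ γ₂ γ₃ : ℝ → ℝ} {d₁ d₂ d₃ t : ℝ} {s : Set ℝ}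
    (hF : DifferentiableAt ℝ F (γ₁ t, γ₂ t, γ₃ t))
    (h₁ : HasDerivWithinAt γ₁ d₁ s t) (h₂ : HasDerivWithinAt γ₂ d₂ s t)
    (h₃ : HasDerivWithinAt γ₃ d₃ s t) :
    HasDerivWithinAt (fun s' => F (γ₁ s', γ₂ s', γ₃ s'))
      (d₁ * fderiv ℝ F (γ₁ t, γ₂ t, γ₃ t) (1,0,0)
       + d₂ * fderiv ℝ F (γ₁ t, γ₂ t, γ₃ t) (0,1,0)
       + d₃ * fderiv ℝ F (γ₁ t, γ₂ t, γ₃ t) (0,0,1)) s t := by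
  have h := hF.hasFDerivAt.comp_hasDerivWithinAt t (h₁.prodMk (h₂.prodMk h₃))
  rwa [clm_apply_decomp] at h

/-- slot lemmas -/
lemma hasDerivAt_slot1 {F : ℝ×ℝ×ℝ → ℝ} {p : ℝ×ℝ×ℝ} (hF : DifferentiableAt ℝ F p) :
    HasDerivAt (fun s => F (s, p.2.1, p.2.2)) (fderiv ℝ F p (1,0,0)) p.1 := by
  have h := hasDerivAt_comp3 (γ₁ := id) (γ₂ := fun _ => p.2.1) (γ₃ := fun _ => p.2.2)
    (t := p.1) (by simpa using hF) (hasDerivAt_id p.1) (hasDerivAt_const _ _) (hasDerivAt_const _ _)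
  simpa using h

lemma hasDerivAt_slot2 {F : ℝ×ℝ×ℝ → ℝ} {p : ℝ×ℝ×ℝ} (hF : DifferentiableAt ℝ F p) :
    HasDerivAt (fun u => F (p.1, u, p.2.2)) (fderiv ℝ F p (0,1,0)) p.2.1 := by
  have h := hasDerivAt_comp3 (γ₁ := fun _ => p.1) (γ₂ := id) (γ₃ := fun _ => p.2.2)
    (t := p.2.1) (by simpa using hF) (hasDerivAt_const _ _) (hasDerivAt_id p.2.1)
    (hasDerivAt_const _ _)
  simpa using h

lemma hasDerivAt_slot3 {F : ℝ×ℝ×ℝ → ℝ} {p : ℝ×ℝ×ℝ} (hF : DifferentiableAt ℝ F p) :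
    HasDerivAt (fun v => F (p.1, p.2.1, v)) (fderiv ℝ F p (0,0,1)) p.2.2 := by
  have h := hasDerivAt_comp3 (γ₁ := fun _ => p.1) (γ₂ := fun _ => p.2.1) (γ₃ := id)
    (t := p.2.2) (by simpa using hF) (hasDerivAt_const _ _) (hasDerivAt_const _ _)
    (hasDerivAt_id p.2.2)
  simpa using h

lemma slot1_id {Φ : ℝ → ℝ → ℝ → ℝ} (hΦ : ContDiff ℝ 2 (fun p : ℝ × ℝ × ℝ => Φ p.1 p.2.1 p.2.2))
    (hΦ0 : ∀ t u, Φ t u 0 = t) (t u : ℝ) :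
    fderiv ℝ (fun p : ℝ × ℝ × ℝ => Φ p.1 p.2.1 p.2.2) (t,u,0) (1,0,0) = 1 := by
  have h := hasDerivAt_slot1 (p := ((t:ℝ),(u:ℝ),(0:ℝ)))
    ((hΦ.differentiable (by norm_num)) _)
  simp only [hΦ0] at h
  exact h.unique (hasDerivAt_id t)

lemma slot2_id {Φ : ℝ → ℝ → ℝ → ℝ} (hΦ : ContDiff ℝ 2 (fun p : ℝ × ℝ × ℝ => Φ p.1 p.2.1 p.2.2))
    (hΦ0 : ∀ t u, Φ t u 0 = t) (t u : ℝ) :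
    fderiv ℝ (fun p : ℝ × ℝ × ℝ => Φ p.1 p.2.1 p.2.2) (t,u,0) (0,1,0) = 0 := by
  have h := hasDerivAt_slot2 (p := ((t:ℝ),(u:ℝ),(0:ℝ)))
    ((hΦ.differentiable (by norm_num)) _)
  simp only [hΦ0] at h
  exact h.unique (hasDerivAt_const _ _)

lemma slot1_id' {Ψ : ℝ → ℝ → ℝ → ℝ} (hΨ : ContDiff ℝ 2 (fun p : ℝ × ℝ × ℝ => Ψ p.1 p.2.1 p.2.2))
    (hΨ0 : ∀ t u, Ψ t u 0 = u) (t u : ℝ) :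
    fderiv ℝ (fun p : ℝ × ℝ × ℝ => Ψ p.1 p.2.1 p.2.2) (t,u,0) (1,0,0) = 0 := by
  have h := hasDerivAt_slot1 (p := ((t:ℝ),(u:ℝ),(0:ℝ)))
    ((hΨ.differentiable (by norm_num)) _)
  simp only [hΨ0] at h
  exact h.unique (hasDerivAt_const _ _)

lemma slot2_id' {Ψ : ℝ → ℝ → ℝ → ℝ} (hΨ : ContDiff ℝ 2 (fun p : ℝ × ℝ × ℝ => Ψ p.1 p.2.1 p.2.2))
    (hΨ0 : ∀ t u, Ψ t u 0 = u) (t u : ℝ) :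
    fderiv ℝ (fun p : ℝ × ℝ × ℝ => Ψ p.1 p.2.1 p.2.2) (t,u,0) (0,1,0) = 1 := by
  have h := hasDerivAt_slot2 (p := ((t:ℝ),(u:ℝ),(0:ℝ)))
    ((hΨ.differentiable (by norm_num)) _)
  simp only [hΨ0] at h
  exact h.unique (hasDerivAt_id u)

lemma slot3_gen {Φ : ℝ → ℝ → ℝ → ℝ} {T : ℝ → ℝ → ℝ}
    (hΦ : ContDiff ℝ 2 (fun p : ℝ × ℝ × ℝ => Φ p.1 p.2.1 p.2.2))
    (hΦT : ∀ t u, deriv (fun ε => Φ t u ε) 0 = T t u) (t u : ℝ) :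
    fderiv ℝ (fun p : ℝ × ℝ × ℝ => Φ p.1 p.2.1 p.2.2) (t,u,0) (0,0,1) = T t u := by
  have h := hasDerivAt_slot3 (p := ((t:ℝ),(u:ℝ),(0:ℝ)))
    ((hΦ.differentiable (by norm_num)) _)
  rw [← hΦT t u]
  exact h.deriv.symm

lemma hasDerivAt_fderiv_comp3 {F : ℝ×ℝ×ℝ → ℝ} (hF : ContDiff ℝ 2 F)
    {γ₁ γ₂ γ₃ : ℝ → ℝ} {d₁ d₂ d₃ t : ℝ} (v : ℝ×ℝ×ℝ)
    (h₁ : HasDerivAt γ₁ d₁ t) (h₂ : HasDerivAt γ₂ d₂ t) (h₃ : HasDerivAt γ₃ d₃ t) :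
    HasDerivAt (fun s => fderiv ℝ F (γ₁ s, γ₂ s, γ₃ s) v)
      (fderiv ℝ (fderiv ℝ F) (γ₁ t, γ₂ t, γ₃ t) (d₁, d₂, d₃) v) t := by
  have hDF : ContDiff ℝ 1 (fderiv ℝ F) := hF.fderiv_right (le_refl _)
  have hcurve : HasDerivAt (fun s => (γ₁ s, γ₂ s, γ₃ s)) (d₁, d₂, d₃) t :=
    h₁.prodMk (h₂.prodMk h₃)
  have hD : HasDerivAt (fun s => fderiv ℝ F (γ₁ s, γ₂ s, γ₃ s))
      (fderiv ℝ (fderiv ℝ F) (γ₁ t, γ₂ t, γ₃ t) (d₁, d₂, d₃)) t :=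
    (hDF.differentiable one_ne_zero _).hasFDerivAt.comp_hasDerivAt t hcurve
  have := hD.clm_apply (hasDerivAt_const t v)
  simpa using this

lemma sym2 {F : ℝ×ℝ×ℝ → ℝ} (hF : ContDiff ℝ 2 F) (z v w : ℝ×ℝ×ℝ) :
    fderiv ℝ (fderiv ℝ F) z v w = fderiv ℝ (fderiv ℝ F) z w v :=
  (hF.contDiffAt.isSymmSndFDerivAt (by simp)) v w

lemma pointwise_invariance
    (a b : ℝ) (hab : a < b)
    (L : ℝ → ℝ → ℝ → ℝ) (hL : ContDiff ℝ 2 (fun p : ℝ × ℝ × ℝ => L p.1 p.2.1 p.2.2))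
    (Φ Ψ : ℝ → ℝ → ℝ → ℝ)
    (hΦ : ContDiff ℝ 2 (fun p : ℝ × ℝ × ℝ => Φ p.1 p.2.1 p.2.2))
    (hΨ : ContDiff ℝ 2 (fun p : ℝ × ℝ × ℝ => Ψ p.1 p.2.1 p.2.2))
    (hΦ0 : ∀ t u, Φ t u 0 = t) (hΨ0 : ∀ t u, Ψ t u 0 = u)
    (x : ℝ → ℝ) (hx : ContDiffOn ℝ 2 x (Set.Icc a b))
    (ε₀ : ℝ) (hε₀ : 0 < ε₀)
    (hint : ∀ ε : ℝ, |ε| < ε₀ → ∀ ta tb, a ≤ ta → ta ≤ tb → tb ≤ b →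
        (∫ s in ta..tb, L s (x s) (derivWithin x (Set.Icc a b) s))
          = ∫ s in ta..tb, L (Φ s (x s) ε) (Ψ s (x s) ε)
              (derivWithin (fun s' => Ψ s' (x s') ε) (Set.Icc a b) s
                / derivWithin (fun s' => Φ s' (x s') ε) (Set.Icc a b) s)
              * derivWithin (fun s' => Φ s' (x s') ε) (Set.Icc a b) s)
    (t : ℝ) (ht : t ∈ Set.Ioo a b) :
    ∃ ε₂ > (0:ℝ), ∀ ε : ℝ, |ε| < ε₂ →
      L t (x t) (derivWithin x (Set.Icc a b) t)
        = L (Φ t (x t) ε) (Ψ t (x t) ε)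
            ((fderiv ℝ (fun p : ℝ × ℝ × ℝ => Ψ p.1 p.2.1 p.2.2) (t, x t, ε) (1,0,0)
              + derivWithin x (Set.Icc a b) t
                * fderiv ℝ (fun p : ℝ × ℝ × ℝ => Ψ p.1 p.2.1 p.2.2) (t, x t, ε) (0,1,0)) /
             (fderiv ℝ (fun p : ℝ × ℝ × ℝ => Φ p.1 p.2.1 p.2.2) (t, x t, ε) (1,0,0)
              + derivWithin x (Set.Icc a b) t
                * fderiv ℝ (fun p : ℝ × ℝ × ℝ => Φ p.1 p.2.1 p.2.2) (t, x t, ε) (0,1,0)))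
          * (fderiv ℝ (fun p : ℝ × ℝ × ℝ => Φ p.1 p.2.1 p.2.2) (t, x t, ε) (1,0,0)
              + derivWithin x (Set.Icc a b) t
                * fderiv ℝ (fun p : ℝ × ℝ × ℝ => Φ p.1 p.2.1 p.2.2) (t, x t, ε) (0,1,0)) := by
  have hI : UniqueDiffOn ℝ (Set.Icc a b) := uniqueDiffOn_Icc hab
  have hxc : ContinuousOn x (Set.Icc a b) := hx.continuousOn
  have hxd : DifferentiableOn ℝ x (Set.Icc a b) := hx.differentiableOn two_ne_zero
  have hdxc : ContinuousOn (derivWithin x (Set.Icc a b)) (Set.Icc a b) :=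
    (hx.derivWithin (m := 1) hI (by norm_num)).continuousOn
  set DΦ := fderiv ℝ (fun p : ℝ × ℝ × ℝ => Φ p.1 p.2.1 p.2.2) with hDΦdef
  set DΨ := fderiv ℝ (fun p : ℝ × ℝ × ℝ => Ψ p.1 p.2.1 p.2.2) with hDΨdef
  set A : ℝ × ℝ → ℝ := fun q =>
    DΦ (q.1, x q.1, q.2) (1,0,0)
      + derivWithin x (Set.Icc a b) q.1 * DΦ (q.1, x q.1, q.2) (0,1,0) with hAdef
  set B : ℝ × ℝ → ℝ := fun q =>
    DΨ (q.1, x q.1, q.2) (1,0,0)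
      + derivWithin x (Set.Icc a b) q.1 * DΨ (q.1, x q.1, q.2) (0,1,0) with hBdef
  -- joint continuity
  have hcurve : ContinuousOn (fun q : ℝ × ℝ => (q.1, x q.1, q.2))
      ((Set.Icc a b) ×ˢ (Set.univ : Set ℝ)) := by
    apply ContinuousOn.prodMk continuousOn_fst
    exact ((hxc.comp continuousOn_fst (fun q hq => hq.1)).prodMk continuousOn_snd)
  have happly : ∀ v : ℝ × ℝ × ℝ, ContinuousOn (fun q : ℝ × ℝ => DΦ (q.1, x q.1, q.2) v)
      ((Set.Icc a b) ×ˢ (Set.univ : Set ℝ)) := fun v =>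
    (((hΦ.continuous_fderiv (by norm_num)).comp_continuousOn hcurve).clm_apply
      continuousOn_const)
  have happly' : ∀ v : ℝ × ℝ × ℝ, ContinuousOn (fun q : ℝ × ℝ => DΨ (q.1, x q.1, q.2) v)
      ((Set.Icc a b) ×ˢ (Set.univ : Set ℝ)) := fun v =>
    (((hΨ.continuous_fderiv (by norm_num)).comp_continuousOn hcurve).clm_apply
      continuousOn_const)
  have hdxq : ContinuousOn (fun q : ℝ × ℝ => derivWithin x (Set.Icc a b) q.1)
      ((Set.Icc a b) ×ˢ (Set.univ : Set ℝ)) :=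
    hdxc.comp continuousOn_fst (fun q hq => hq.1)
  have hAc : ContinuousOn A ((Set.Icc a b) ×ˢ (Set.univ : Set ℝ)) :=
    (happly _).add (hdxq.mul (happly _))
  have hBc : ContinuousOn B ((Set.Icc a b) ×ˢ (Set.univ : Set ℝ)) :=
    (happly' _).add (hdxq.mul (happly' _))
  -- derivWithin formulas
  have hAeq : ∀ s ∈ Set.Icc a b, ∀ ε : ℝ,
      derivWithin (fun s' => Φ s' (x s') ε) (Set.Icc a b) s = A (s, ε) := by
    intro s hs ε
    have hder := hasDerivWithinAt_comp3 (F := fun p : ℝ × ℝ × ℝ => Φ p.1 p.2.1 p.2.2)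
      (γ₁ := id) (γ₂ := x) (γ₃ := fun _ => ε) (t := s) (s := Set.Icc a b)
      ((hΦ.differentiable (by norm_num)) _)
      (hasDerivWithinAt_id s _) ((hxd s hs).hasDerivWithinAt) (hasDerivWithinAt_const _ _ _)
    have := hder.derivWithin (hI s hs)
    simpa [hAdef, hDΦdef] using this
  have hBeq : ∀ s ∈ Set.Icc a b, ∀ ε : ℝ,
      derivWithin (fun s' => Ψ s' (x s') ε) (Set.Icc a b) s = B (s, ε) := by
    intro s hs ε
    have hder := hasDerivWithinAt_comp3 (F := fun p : ℝ × ℝ × ℝ => Ψ p.1 p.2.1 p.2.2)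
      (γ₁ := id) (γ₂ := x) (γ₃ := fun _ => ε) (t := s) (s := Set.Icc a b)
      ((hΨ.differentiable (by norm_num)) _)
      (hasDerivWithinAt_id s _) ((hxd s hs).hasDerivWithinAt) (hasDerivWithinAt_const _ _ _)
    have := hder.derivWithin (hI s hs)
    simpa [hBdef, hDΨdef] using this
  have hA0 : ∀ s ∈ Set.Icc a b, A (s, 0) = 1 := by
    intro s hs
    simp only [hAdef, hDΦdef]
    rw [slot1_id hΦ hΦ0, slot2_id hΦ hΦ0]
    ring
  -- localization
  obtain ⟨hat, htb⟩ := ht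
  set δ := min (t - a) (b - t) / 2 with hδdef
  have hδ : 0 < δ := by
    apply div_pos _ (by norm_num)
    exact lt_min (by linarith) (by linarith)
  have haK : a < t - δ := by
    have : δ < t - a := by
      have h1 : δ ≤ (t - a) / 2 := by
        rw [hδdef]; gcongr; exact min_le_left _ _
      linarith
    linarith
  have hKb : t + δ < b := by
    have : δ < b - t := by
      have h1 : δ ≤ (b - t) / 2 := by
        rw [hδdef]; gcongr; exact min_le_right _ _
      linarith
    linarith
  have hKI : Set.Icc (t - δ) (t + δ) ⊆ Set.Icc a b :=
    Set.Icc_subset_Icc (le_of_lt haK) (le_of_lt hKb)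
  -- uniform continuity gives uniform positivity of A
  have hScpt : IsCompact ((Set.Icc (t - δ) (t + δ)) ×ˢ (Set.Icc (-1:ℝ) 1)) :=
    isCompact_Icc.prod isCompact_Icc
  have hucA : UniformContinuousOn A ((Set.Icc (t - δ) (t + δ)) ×ˢ (Set.Icc (-1:ℝ) 1)) :=
    hScpt.uniformContinuousOn_of_continuous
      (hAc.mono (Set.prod_mono hKI (Set.subset_univ _)))
  rw [Metric.uniformContinuousOn_iff] at hucA
  obtain ⟨η, hη, hηA⟩ := hucA (1/2) (by norm_num)
  refine ⟨min (min η 1) ε₀, lt_min (lt_min hη (by norm_num)) hε₀, ?_⟩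
  intro ε hε
  have hεη : |ε| < η := lt_of_lt_of_le hε (le_trans (min_le_left _ _) (min_le_left _ _))
  have hε1 : |ε| ≤ 1 := le_of_lt (lt_of_lt_of_le hε
    (le_trans (min_le_left _ _) (min_le_right _ _)))
  have hεε₀ : |ε| < ε₀ := lt_of_lt_of_le hε (min_le_right _ _)
  have hmem : ∀ s ∈ Set.Icc (t - δ) (t + δ),
      ((s, ε) ∈ (Set.Icc (t - δ) (t + δ)) ×ˢ (Set.Icc (-1:ℝ) 1)) := by
    intro s hs
    exact ⟨hs, by constructor <;> [linarith [abs_le.mp hε1 |>.1]; linarith [abs_le.mp hε1 |>.2]]⟩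
  have hApos : ∀ s ∈ Set.Icc (t - δ) (t + δ), (1:ℝ)/2 < A (s, ε) := by
    intro s hs
    have h0mem : ((s, (0:ℝ)) ∈ (Set.Icc (t - δ) (t + δ)) ×ˢ (Set.Icc (-1:ℝ) 1)) :=
      ⟨hs, by norm_num⟩
    have hd : dist ((s, ε) : ℝ × ℝ) ((s, (0:ℝ))) < η := by
      rw [Prod.dist_eq]
      simp only [dist_self, Real.dist_eq, sub_zero]
      exact max_lt hη hεη
    have := hηA _ (hmem s hs) _ h0mem hd
    rw [Real.dist_eq, hA0 s (hKI hs)] at this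
    have := abs_lt.mp this
    linarith [this.1]
  -- continuity of transformed integrand for this fixed ε
  have htK : t ∈ Set.Ioo (t - δ) (t + δ) := by constructor <;> linarith
  set G : ℝ → ℝ := fun s => L (Φ s (x s) ε) (Ψ s (x s) ε) (B (s, ε) / A (s, ε)) * A (s, ε)
    with hGdef
  have hsub : Set.MapsTo (fun s : ℝ => ((s, ε) : ℝ × ℝ)) (Set.Icc (t - δ) (t + δ))
      ((Set.Icc a b) ×ˢ (Set.univ : Set ℝ)) := fun s hs => ⟨hKI hs, trivial⟩
  have hse : Continuous (fun s : ℝ => ((s, ε) : ℝ × ℝ)) :=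
    continuous_id.prodMk continuous_const
  have hAe : ContinuousOn (fun s => A (s, ε)) (Set.Icc (t - δ) (t + δ)) :=
    hAc.comp hse.continuousOn hsub
  have hBe : ContinuousOn (fun s => B (s, ε)) (Set.Icc (t - δ) (t + δ)) :=
    hBc.comp hse.continuousOn hsub
  have hAne : ∀ s ∈ Set.Icc (t - δ) (t + δ), A (s, ε) ≠ 0 := by
    intro s hs
    have := hApos s hs
    exact ne_of_gt (lt_trans (by norm_num) this)
  have hphic : ContinuousOn (fun s => Φ s (x s) ε) (Set.Icc (t - δ) (t + δ)) :=
    hΦ.continuous.comp_continuousOn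
      (continuousOn_id.prodMk (((hxc.mono hKI)).prodMk continuousOn_const))
  have hpsic : ContinuousOn (fun s => Ψ s (x s) ε) (Set.Icc (t - δ) (t + δ)) :=
    hΨ.continuous.comp_continuousOn
      (continuousOn_id.prodMk (((hxc.mono hKI)).prodMk continuousOn_const))
  have hGc : ContinuousOn G (Set.Icc (t - δ) (t + δ)) :=
    (hL.continuous.comp_continuousOn
      (hphic.prodMk (hpsic.prodMk (hBe.div hAe hAne)))).mul hAe
  set f : ℝ → ℝ := fun s => L s (x s) (derivWithin x (Set.Icc a b) s) with hfdef
  have hfc : ContinuousOn f (Set.Icc a b) :=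
    hL.continuous.comp_continuousOn (continuousOn_id.prodMk (hxc.prodMk hdxc))
  -- integral equality near t
  have hkey : ∀ u ∈ Set.Ioo (t - δ) (t + δ),
      (∫ s in (t - δ)..u, f s) = ∫ s in (t - δ)..u, G s := by
    intro u hu
    have h1 := hint ε hεε₀ (t - δ) u (le_of_lt haK) (le_of_lt hu.1)
      (by linarith [hu.2, hKb])
    rw [h1]
    apply intervalIntegral.integral_congr
    intro s hs
    rw [Set.uIcc_of_le (le_of_lt hu.1)] at hs
    have hs' : s ∈ Set.Icc a b := hKI ⟨hs.1, le_trans hs.2 (le_of_lt hu.2)⟩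
    simp only [hGdef, hAeq s hs' ε, hBeq s hs' ε]
  -- FTC at t
  have hintf : IntervalIntegrable f MeasureTheory.volume (t - δ) t := by
    apply ContinuousOn.intervalIntegrable
    apply hfc.mono
    rw [Set.uIcc_of_le (by linarith : t - δ ≤ t)]
    exact Set.Icc_subset_Icc (le_of_lt haK) (le_of_lt htb)
  have hintG : IntervalIntegrable G MeasureTheory.volume (t - δ) t := by
    apply ContinuousOn.intervalIntegrable
    apply hGc.mono
    rw [Set.uIcc_of_le (by linarith : t - δ ≤ t)]
    exact Set.Icc_subset_Icc le_rfl (by linarith)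
  have hF₁ : HasDerivAt (fun u => ∫ s in (t - δ)..u, f s) (f t) t :=
    intervalIntegral.integral_hasDerivAt_right hintf
      ((hfc.mono Set.Ioo_subset_Icc_self).stronglyMeasurableAtFilter isOpen_Ioo t ⟨hat, htb⟩)
      (hfc.continuousAt (Icc_mem_nhds hat htb))
  have hF₂ : HasDerivAt (fun u => ∫ s in (t - δ)..u, G s) (G t) t :=
    intervalIntegral.integral_hasDerivAt_right hintG
      ((hGc.mono Set.Ioo_subset_Icc_self).stronglyMeasurableAtFilter isOpen_Ioo t htK)
      (hGc.continuousAt (Icc_mem_nhds htK.1 htK.2))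
  have hEqF : (fun u => ∫ s in (t - δ)..u, f s) =ᶠ[nhds t]
      (fun u => ∫ s in (t - δ)..u, G s) :=
    Filter.eventuallyEq_of_mem (Ioo_mem_nhds htK.1 htK.2) hkey
  have hF₂' : HasDerivAt (fun u => ∫ s in (t - δ)..u, G s) (f t) t :=
    hF₁.congr_of_eventuallyEq hEqF.symm
  have hft : f t = G t := hF₂'.unique hF₂
  simpa [hGdef, hAdef, hBdef, hfdef, hDΦdef, hDΨdef] using hft

/-- **Noether's theorem (classical).**
Suppose the functional `J[x] = ∫_a^b L(t,x(t),ẋ(t)) dt` is invariant under a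
one-parameter family of transformations `t̄ = Φ(t,x,ε)`, `x̄ = Ψ(t,x,ε)`
reducing to the identity at `ε = 0`, with `C¹` infinitesimal generators
`T = ∂Φ/∂ε|₀` and `X = ∂Ψ/∂ε|₀` (so `t̄ = t + εT(t,x) + o(ε)`,
`x̄ = x + εX(t,x) + o(ε)`): for every subinterval `[t_a,t_b] ⊆ [a,b]`,
`∫_{t_a}^{t_b} L(t,x(t),ẋ(t)) dt = ∫_{t̄(t_a)}^{t̄(t_b)} L(t̄,x̄(t̄),dx̄/dt̄) dt̄`
(written below after the change of variables `t̄ = Φ(t,x(t),ε)`).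
Then along every `x ∈ C²([a,b],ℝ)` satisfying the Euler–Lagrange equation
`L_x(t,x(t),ẋ(t)) = d/dt [L_ẋ(t,x(t),ẋ(t))]`, the quantity
`∂L/∂ẋ·X(t,x(t)) + (L - ∂L/∂ẋ·ẋ(t))·T(t,x(t))` is constant on `[a,b]`. -/
theorem noether_theorem
    (a b : ℝ) (hab : a < b)
    (L : ℝ → ℝ → ℝ → ℝ)
    (hL : ContDiff ℝ 2 (fun p : ℝ × ℝ × ℝ => L p.1 p.2.1 p.2.2))
    (T X : ℝ → ℝ → ℝ)
    (hT : ContDiff ℝ 1 (fun p : ℝ × ℝ => T p.1 p.2))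
    (hX : ContDiff ℝ 1 (fun p : ℝ × ℝ => X p.1 p.2))
    (Φ Ψ : ℝ → ℝ → ℝ → ℝ)
    (hΦ : ContDiff ℝ 2 (fun p : ℝ × ℝ × ℝ => Φ p.1 p.2.1 p.2.2))
    (hΨ : ContDiff ℝ 2 (fun p : ℝ × ℝ × ℝ => Ψ p.1 p.2.1 p.2.2))
    (hΦ0 : ∀ t u, Φ t u 0 = t) (hΨ0 : ∀ t u, Ψ t u 0 = u)
    (hΦT : ∀ t u, deriv (fun ε => Φ t u ε) 0 = T t u)
    (hΨX : ∀ t u, deriv (fun ε => Ψ t u ε) 0 = X t u)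
    (hinv : ∀ x : ℝ → ℝ, ContDiffOn ℝ 2 x (Set.Icc a b) →
      ∃ ε₀ > (0:ℝ), ∀ ε : ℝ, |ε| < ε₀ → ∀ ta tb, a ≤ ta → ta ≤ tb → tb ≤ b →
        (∫ t in ta..tb, L t (x t) (derivWithin x (Set.Icc a b) t))
          = ∫ t in ta..tb,
              L (Φ t (x t) ε) (Ψ t (x t) ε)
                (derivWithin (fun s => Ψ s (x s) ε) (Set.Icc a b) t
                  / derivWithin (fun s => Φ s (x s) ε) (Set.Icc a b) t)
              * derivWithin (fun s => Φ s (x s) ε) (Set.Icc a b) t) :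
    ∀ x : ℝ → ℝ, ContDiffOn ℝ 2 x (Set.Icc a b) →
      (∀ t ∈ Set.Icc a b,
        deriv (fun u => L t u (derivWithin x (Set.Icc a b) t)) (x t)
          = derivWithin
              (fun s => deriv (fun v => L s (x s) v) (derivWithin x (Set.Icc a b) s))
              (Set.Icc a b) t) →
      ∃ c : ℝ, ∀ t ∈ Set.Icc a b,
        deriv (fun v => L t (x t) v) (derivWithin x (Set.Icc a b) t) * X t (x t)
        + (L t (x t) (derivWithin x (Set.Icc a b) t)
            - deriv (fun v => L t (x t) v) (derivWithin x (Set.Icc a b) t)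
                * derivWithin x (Set.Icc a b) t) * T t (x t)
        = c := by
  intro x hx hEL
  have hI : UniqueDiffOn ℝ (Set.Icc a b) := uniqueDiffOn_Icc hab
  have hxc : ContinuousOn x (Set.Icc a b) := hx.continuousOn
  have hdxc : ContinuousOn (derivWithin x (Set.Icc a b)) (Set.Icc a b) :=
    (hx.derivWithin (m := 1) hI (by norm_num)).continuousOn
  have hLd : Differentiable ℝ (fun p : ℝ × ℝ × ℝ => L p.1 p.2.1 p.2.2) :=
    hL.differentiable (by norm_num)
  -- abbreviation for the conserved quantity
  set N : ℝ → ℝ := fun r =>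
    deriv (fun v => L r (x r) v) (derivWithin x (Set.Icc a b) r) * X r (x r)
      + (L r (x r) (derivWithin x (Set.Icc a b) r)
          - deriv (fun v => L r (x r) v) (derivWithin x (Set.Icc a b) r)
              * derivWithin x (Set.Icc a b) r) * T r (x r) with hNdef
  -- curried third partial = directional fderiv
  have hP3 : ∀ r u v : ℝ, deriv (fun w => L r u w) v
      = fderiv ℝ (fun p : ℝ × ℝ × ℝ => L p.1 p.2.1 p.2.2) (r, u, v) (0,0,1) :=
    fun r u v => (hasDerivAt_slot3 (p := (r,u,v)) (hLd _)).deriv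
  -- continuity of N on [a,b]
  have hNc : ContinuousOn N (Set.Icc a b) := by
    have hNeq : N = fun r =>
        fderiv ℝ (fun p : ℝ × ℝ × ℝ => L p.1 p.2.1 p.2.2)
            (r, x r, derivWithin x (Set.Icc a b) r) (0,0,1) * X r (x r)
          + (L r (x r) (derivWithin x (Set.Icc a b) r)
              - fderiv ℝ (fun p : ℝ × ℝ × ℝ => L p.1 p.2.1 p.2.2)
                  (r, x r, derivWithin x (Set.Icc a b) r) (0,0,1)
                  * derivWithin x (Set.Icc a b) r) * T r (x r) := by
      funext r
      simp only [hNdef]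
      rw [hP3 r (x r) (derivWithin x (Set.Icc a b) r)]
    rw [hNeq]
    have hcurve : ContinuousOn (fun r : ℝ => ((r, x r, derivWithin x (Set.Icc a b) r) : ℝ × ℝ × ℝ))
        (Set.Icc a b) := continuousOn_id.prodMk (hxc.prodMk hdxc)
    have hDL3 : ContinuousOn (fun r : ℝ =>
        fderiv ℝ (fun p : ℝ × ℝ × ℝ => L p.1 p.2.1 p.2.2)
          (r, x r, derivWithin x (Set.Icc a b) r) (0,0,1)) (Set.Icc a b) :=
      ((hL.continuous_fderiv (by norm_num)).comp_continuousOn hcurve).clm_apply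
        continuousOn_const
    have hLc : ContinuousOn (fun r : ℝ => L r (x r) (derivWithin x (Set.Icc a b) r))
        (Set.Icc a b) := hL.continuous.comp_continuousOn hcurve
    have hXc : ContinuousOn (fun r : ℝ => X r (x r)) (Set.Icc a b) :=
      hX.continuous.comp_continuousOn (continuousOn_id.prodMk hxc)
    have hTc : ContinuousOn (fun r : ℝ => T r (x r)) (Set.Icc a b) :=
      hT.continuous.comp_continuousOn (continuousOn_id.prodMk hxc)
    exact (hDL3.mul hXc).add ((hLc.sub (hDL3.mul hdxc)).mul hTc)
  -- N has derivative 0 at every interior point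
  have hN0 : ∀ t ∈ Set.Ioo a b, HasDerivAt N 0 t := by
    intro t ht
    obtain ⟨hat, htb⟩ := ht
    have hmem : Set.Icc a b ∈ nhds t := Icc_mem_nhds hat htb
    have hd : derivWithin x (Set.Icc a b) t = deriv x t := derivWithin_of_mem_nhds hmem
    have hxt : ContDiffAt ℝ 2 x t := hx.contDiffAt hmem
    have hx' : HasDerivAt x (deriv x t) t :=
      (hxt.differentiableAt (by norm_num)).hasDerivAt
    obtain ⟨u, hu, hcd⟩ := hxt.contDiffOn (le_refl 2) (by simp)
    have htu : t ∈ interior u := mem_interior_iff_mem_nhds.mpr hu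
    have hx'' : HasDerivAt (deriv x) (deriv (deriv x) t) t := by
      have hdx1 : ContDiffOn ℝ 1 (deriv x) (interior u) :=
        (hcd.mono interior_subset).deriv_of_isOpen isOpen_interior (by norm_num)
      have hdiff : DifferentiableAt ℝ (deriv x) t :=
        (hdx1.differentiableOn (by norm_num) t htu).differentiableAt
          (isOpen_interior.mem_nhds htu)
      exact hdiff.hasDerivAt
    have hev : ∀ s ∈ Set.Ioo a b, derivWithin x (Set.Icc a b) s = deriv x s :=
      fun s hs => derivWithin_of_mem_nhds (Icc_mem_nhds hs.1 hs.2)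
    -- pointwise invariance identity at t
    obtain ⟨ε₀, hε₀, hint⟩ := hinv x hx
    obtain ⟨ε₂, hε₂, hpt⟩ := pointwise_invariance a b hab L hL Φ Ψ hΦ hΨ hΦ0 hΨ0 x hx
      ε₀ hε₀ hint t ⟨hat, htb⟩
    rw [hd] at hpt
    -- ε-derivatives of fderiv slices
    have hDΦε : ∀ v : ℝ × ℝ × ℝ,
        HasDerivAt (fun ε => fderiv ℝ (fun p : ℝ × ℝ × ℝ => Φ p.1 p.2.1 p.2.2) (t, x t, ε) v)
          (fderiv ℝ (fderiv ℝ (fun p : ℝ × ℝ × ℝ => Φ p.1 p.2.1 p.2.2)) (t, x t, 0) (0,0,1) v)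
          0 := by
      intro v
      have h := hasDerivAt_fderiv_comp3 hΦ (γ₁ := fun _ => t) (γ₂ := fun _ => x t) (γ₃ := id)
        v (hasDerivAt_const 0 t) (hasDerivAt_const 0 (x t)) (hasDerivAt_id 0)
      simpa using h
    have hDΨε : ∀ v : ℝ × ℝ × ℝ,
        HasDerivAt (fun ε => fderiv ℝ (fun p : ℝ × ℝ × ℝ => Ψ p.1 p.2.1 p.2.2) (t, x t, ε) v)
          (fderiv ℝ (fderiv ℝ (fun p : ℝ × ℝ × ℝ => Ψ p.1 p.2.1 p.2.2)) (t, x t, 0) (0,0,1) v)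
          0 := by
      intro v
      have h := hasDerivAt_fderiv_comp3 hΨ (γ₁ := fun _ => t) (γ₂ := fun _ => x t) (γ₃ := id)
        v (hasDerivAt_const 0 t) (hasDerivAt_const 0 (x t)) (hasDerivAt_id 0)
      simpa using h
    -- total derivatives of T,X along the curve
    have hTdot : HasDerivAt (fun s => T s (x s))
        (fderiv ℝ (fderiv ℝ (fun p : ℝ × ℝ × ℝ => Φ p.1 p.2.1 p.2.2)) (t, x t, 0)
          (1, deriv x t, 0) (0,0,1)) t := by
      have heqT : (fun s => T s (x s))
          = fun s => fderiv ℝ (fun p : ℝ × ℝ × ℝ => Φ p.1 p.2.1 p.2.2) (s, x s, 0) (0,0,1) :=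
        funext fun s => (slot3_gen hΦ hΦT s (x s)).symm
      rw [heqT]
      exact hasDerivAt_fderiv_comp3 hΦ (0,0,1) (hasDerivAt_id t) hx' (hasDerivAt_const t 0)
    have hXdot : HasDerivAt (fun s => X s (x s))
        (fderiv ℝ (fderiv ℝ (fun p : ℝ × ℝ × ℝ => Ψ p.1 p.2.1 p.2.2)) (t, x t, 0)
          (1, deriv x t, 0) (0,0,1)) t := by
      have heqX : (fun s => X s (x s))
          = fun s => fderiv ℝ (fun p : ℝ × ℝ × ℝ => Ψ p.1 p.2.1 p.2.2) (s, x s, 0) (0,0,1) :=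
        funext fun s => (slot3_gen hΨ hΨX s (x s)).symm
      rw [heqX]
      exact hasDerivAt_fderiv_comp3 hΨ (0,0,1) (hasDerivAt_id t) hx' (hasDerivAt_const t 0)
    -- derivative of the A,B factors in ε, with Schwarz symmetry
    have hsymA : fderiv ℝ (fderiv ℝ (fun p : ℝ × ℝ × ℝ => Φ p.1 p.2.1 p.2.2)) (t, x t, 0)
          (0,0,1) (1,0,0)
        + deriv x t * fderiv ℝ (fderiv ℝ (fun p : ℝ × ℝ × ℝ => Φ p.1 p.2.1 p.2.2)) (t, x t, 0)
          (0,0,1) (0,1,0)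
        = fderiv ℝ (fderiv ℝ (fun p : ℝ × ℝ × ℝ => Φ p.1 p.2.1 p.2.2)) (t, x t, 0)
          (1, deriv x t, 0) (0,0,1) := by
      rw [clm_apply_decomp' _ 1 (deriv x t) 0 (0,0,1),
        sym2 hΦ (t, x t, 0) (0,0,1) (1,0,0), sym2 hΦ (t, x t, 0) (0,0,1) (0,1,0)]
      ring
    have hsymB : fderiv ℝ (fderiv ℝ (fun p : ℝ × ℝ × ℝ => Ψ p.1 p.2.1 p.2.2)) (t, x t, 0)
          (0,0,1) (1,0,0)
        + deriv x t * fderiv ℝ (fderiv ℝ (fun p : ℝ × ℝ × ℝ => Ψ p.1 p.2.1 p.2.2)) (t, x t, 0)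
          (0,0,1) (0,1,0)
        = fderiv ℝ (fderiv ℝ (fun p : ℝ × ℝ × ℝ => Ψ p.1 p.2.1 p.2.2)) (t, x t, 0)
          (1, deriv x t, 0) (0,0,1) := by
      rw [clm_apply_decomp' _ 1 (deriv x t) 0 (0,0,1),
        sym2 hΨ (t, x t, 0) (0,0,1) (1,0,0), sym2 hΨ (t, x t, 0) (0,0,1) (0,1,0)]
      ring
    have hA' : HasDerivAt (fun ε =>
        fderiv ℝ (fun p : ℝ × ℝ × ℝ => Φ p.1 p.2.1 p.2.2) (t, x t, ε) (1,0,0)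
          + deriv x t * fderiv ℝ (fun p : ℝ × ℝ × ℝ => Φ p.1 p.2.1 p.2.2) (t, x t, ε) (0,1,0))
        (fderiv ℝ (fderiv ℝ (fun p : ℝ × ℝ × ℝ => Φ p.1 p.2.1 p.2.2)) (t, x t, 0)
          (1, deriv x t, 0) (0,0,1)) 0 := by
      rw [← hsymA]
      exact (hDΦε (1,0,0)).add ((hDΦε (0,1,0)).const_mul (deriv x t))
    have hB' : HasDerivAt (fun ε =>
        fderiv ℝ (fun p : ℝ × ℝ × ℝ => Ψ p.1 p.2.1 p.2.2) (t, x t, ε) (1,0,0)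
          + deriv x t * fderiv ℝ (fun p : ℝ × ℝ × ℝ => Ψ p.1 p.2.1 p.2.2) (t, x t, ε) (0,1,0))
        (fderiv ℝ (fderiv ℝ (fun p : ℝ × ℝ × ℝ => Ψ p.1 p.2.1 p.2.2)) (t, x t, 0)
          (1, deriv x t, 0) (0,0,1)) 0 := by
      rw [← hsymB]
      exact (hDΨε (1,0,0)).add ((hDΨε (0,1,0)).const_mul (deriv x t))
    -- values at ε = 0
    have hA0 : fderiv ℝ (fun p : ℝ × ℝ × ℝ => Φ p.1 p.2.1 p.2.2) (t, x t, 0) (1,0,0)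
        + deriv x t * fderiv ℝ (fun p : ℝ × ℝ × ℝ => Φ p.1 p.2.1 p.2.2) (t, x t, 0) (0,1,0)
        = 1 := by
      rw [slot1_id hΦ hΦ0, slot2_id hΦ hΦ0]; ring
    have hB0 : fderiv ℝ (fun p : ℝ × ℝ × ℝ => Ψ p.1 p.2.1 p.2.2) (t, x t, 0) (1,0,0)
        + deriv x t * fderiv ℝ (fun p : ℝ × ℝ × ℝ => Ψ p.1 p.2.1 p.2.2) (t, x t, 0) (0,1,0)
        = deriv x t := by
      rw [slot1_id' hΨ hΨ0, slot2_id' hΨ hΨ0]; ring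
    have hp' : HasDerivAt (fun ε => Φ t (x t) ε) (T t (x t)) 0 := by
      have h := hasDerivAt_slot3 (p := ((t:ℝ), x t, (0:ℝ)))
        ((hΦ.differentiable (by norm_num)) _)
      rw [slot3_gen hΦ hΦT] at h
      exact h
    have hq' : HasDerivAt (fun ε => Ψ t (x t) ε) (X t (x t)) 0 := by
      have h := hasDerivAt_slot3 (p := ((t:ℝ), x t, (0:ℝ)))
        ((hΨ.differentiable (by norm_num)) _)
      rw [slot3_gen hΨ hΨX] at h
      exact h
    have hAne : fderiv ℝ (fun p : ℝ × ℝ × ℝ => Φ p.1 p.2.1 p.2.2) (t, x t, 0) (1,0,0)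
        + deriv x t * fderiv ℝ (fun p : ℝ × ℝ × ℝ => Φ p.1 p.2.1 p.2.2) (t, x t, 0) (0,1,0)
        ≠ 0 := by rw [hA0]; norm_num
    have hdiv := hB'.div hA' hAne
    have hL3 := hasDerivAt_comp3 (F := fun p : ℝ × ℝ × ℝ => L p.1 p.2.1 p.2.2)
      (γ₁ := fun ε => Φ t (x t) ε) (γ₂ := fun ε => Ψ t (x t) ε)
      (γ₃ := fun ε =>
        (fderiv ℝ (fun p : ℝ × ℝ × ℝ => Ψ p.1 p.2.1 p.2.2) (t, x t, ε) (1,0,0)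
          + deriv x t * fderiv ℝ (fun p : ℝ × ℝ × ℝ => Ψ p.1 p.2.1 p.2.2) (t, x t, ε) (0,1,0))
        / (fderiv ℝ (fun p : ℝ × ℝ × ℝ => Φ p.1 p.2.1 p.2.2) (t, x t, ε) (1,0,0)
          + deriv x t * fderiv ℝ (fun p : ℝ × ℝ × ℝ => Φ p.1 p.2.1 p.2.2) (t, x t, ε) (0,1,0)))
      (hLd _) hp' hq' hdiv
    have hg := hL3.mul hA'
    simp only [hΦ0, hΨ0, hA0, hB0, div_one, one_pow, mul_one, one_mul] at hg
    -- the function whose derivative we just computed is locally constant in ε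
    have hgconst : (fun ε =>
        (fun p : ℝ × ℝ × ℝ => L p.1 p.2.1 p.2.2)
          (Φ t (x t) ε, Ψ t (x t) ε,
            (fderiv ℝ (fun p : ℝ × ℝ × ℝ => Ψ p.1 p.2.1 p.2.2) (t, x t, ε) (1,0,0)
              + deriv x t * fderiv ℝ (fun p : ℝ × ℝ × ℝ => Ψ p.1 p.2.1 p.2.2) (t, x t, ε) (0,1,0))
            / (fderiv ℝ (fun p : ℝ × ℝ × ℝ => Φ p.1 p.2.1 p.2.2) (t, x t, ε) (1,0,0)
              + deriv x t * fderiv ℝ (fun p : ℝ × ℝ × ℝ => Φ p.1 p.2.1 p.2.2) (t, x t, ε) (0,1,0)))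
        * (fderiv ℝ (fun p : ℝ × ℝ × ℝ => Φ p.1 p.2.1 p.2.2) (t, x t, ε) (1,0,0)
            + deriv x t * fderiv ℝ (fun p : ℝ × ℝ × ℝ => Φ p.1 p.2.1 p.2.2) (t, x t, ε) (0,1,0)))
        =ᶠ[nhds 0] (fun _ => L t (x t) (deriv x t)) := by
      filter_upwards [Metric.ball_mem_nhds (0:ℝ) hε₂] with ε hε
      have hεabs : |ε| < ε₂ := by
        rw [← Real.norm_eq_abs, ← sub_zero ε] at *
        simpa [Real.dist_eq] using mem_ball_iff_norm.mp hε
      exact (hpt ε hεabs).symm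
    have hstar : T t (x t) * fderiv ℝ (fun p : ℝ × ℝ × ℝ => L p.1 p.2.1 p.2.2)
          (t, x t, deriv x t) (1,0,0)
        + X t (x t) * fderiv ℝ (fun p : ℝ × ℝ × ℝ => L p.1 p.2.1 p.2.2)
          (t, x t, deriv x t) (0,1,0)
        + (fderiv ℝ (fderiv ℝ (fun p : ℝ × ℝ × ℝ => Ψ p.1 p.2.1 p.2.2)) (t, x t, 0)
              (1, deriv x t, 0) (0,0,1)
            - deriv x t * fderiv ℝ (fderiv ℝ (fun p : ℝ × ℝ × ℝ => Φ p.1 p.2.1 p.2.2)) (t, x t, 0)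
              (1, deriv x t, 0) (0,0,1))
          * fderiv ℝ (fun p : ℝ × ℝ × ℝ => L p.1 p.2.1 p.2.2) (t, x t, deriv x t) (0,0,1)
        + L t (x t) (deriv x t)
          * fderiv ℝ (fderiv ℝ (fun p : ℝ × ℝ × ℝ => Φ p.1 p.2.1 p.2.2)) (t, x t, 0)
              (1, deriv x t, 0) (0,0,1) = 0 := by
      have h1 := hg.deriv
      have h2 := hgconst.deriv_eq
      replace h1 := h2.symm.trans h1
      rw [deriv_const] at h1
      linear_combination -h1
    -- Euler–Lagrange at t, rewritten with fderiv
    have hM : fderiv ℝ (fderiv ℝ (fun p : ℝ × ℝ × ℝ => L p.1 p.2.1 p.2.2))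
          (t, x t, deriv x t) (1, deriv x t, deriv (deriv x) t) (0,0,1)
        = fderiv ℝ (fun p : ℝ × ℝ × ℝ => L p.1 p.2.1 p.2.2) (t, x t, deriv x t) (0,1,0) := by
      have hP2 : deriv (fun w => L t w (derivWithin x (Set.Icc a b) t)) (x t)
          = fderiv ℝ (fun p : ℝ × ℝ × ℝ => L p.1 p.2.1 p.2.2)
              (t, x t, derivWithin x (Set.Icc a b) t) (0,1,0) :=
        (hasDerivAt_slot2 (p := (t, x t, derivWithin x (Set.Icc a b) t)) (hLd _)).deriv
      have h1 := hEL t ⟨le_of_lt hat, le_of_lt htb⟩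
      have h2 : derivWithin
            (fun s => deriv (fun v => L s (x s) v) (derivWithin x (Set.Icc a b) s))
            (Set.Icc a b) t
          = deriv (fun s => deriv (fun v => L s (x s) v) (derivWithin x (Set.Icc a b) s)) t :=
        derivWithin_of_mem_nhds hmem
      have h3 : (fun s => deriv (fun v => L s (x s) v) (derivWithin x (Set.Icc a b) s))
          =ᶠ[nhds t] (fun s => fderiv ℝ (fun p : ℝ × ℝ × ℝ => L p.1 p.2.1 p.2.2)
            (s, x s, deriv x s) (0,0,1)) := by
        filter_upwards [Ioo_mem_nhds hat htb] with s hs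
        rw [hev s hs, hP3 s (x s) (deriv x s)]
      have h4 : HasDerivAt (fun s => fderiv ℝ (fun p : ℝ × ℝ × ℝ => L p.1 p.2.1 p.2.2)
            (s, x s, deriv x s) (0,0,1))
          (fderiv ℝ (fderiv ℝ (fun p : ℝ × ℝ × ℝ => L p.1 p.2.1 p.2.2))
            (t, x t, deriv x t) (1, deriv x t, deriv (deriv x) t) (0,0,1)) t :=
        hasDerivAt_fderiv_comp3 hL (0,0,1) (hasDerivAt_id t) hx' hx''
      calc fderiv ℝ (fderiv ℝ (fun p : ℝ × ℝ × ℝ => L p.1 p.2.1 p.2.2))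
            (t, x t, deriv x t) (1, deriv x t, deriv (deriv x) t) (0,0,1)
          = deriv (fun s => fderiv ℝ (fun p : ℝ × ℝ × ℝ => L p.1 p.2.1 p.2.2)
              (s, x s, deriv x s) (0,0,1)) t := h4.deriv.symm
        _ = deriv (fun s => deriv (fun v => L s (x s) v) (derivWithin x (Set.Icc a b) s)) t :=
            h3.deriv_eq.symm
        _ = derivWithin (fun s => deriv (fun v => L s (x s) v) (derivWithin x (Set.Icc a b) s))
              (Set.Icc a b) t := h2.symm
        _ = deriv (fun w => L t w (derivWithin x (Set.Icc a b) t)) (x t) := h1.symm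
        _ = fderiv ℝ (fun p : ℝ × ℝ × ℝ => L p.1 p.2.1 p.2.2)
              (t, x t, derivWithin x (Set.Icc a b) t) (0,1,0) := hP2
        _ = fderiv ℝ (fun p : ℝ × ℝ × ℝ => L p.1 p.2.1 p.2.2) (t, x t, deriv x t) (0,1,0) := by
              rw [hd]
    -- N agrees with a differentiable expression near t
    have hNev : N =ᶠ[nhds t] (fun r =>
        fderiv ℝ (fun p : ℝ × ℝ × ℝ => L p.1 p.2.1 p.2.2) (r, x r, deriv x r) (0,0,1)
          * X r (x r)
        + (L r (x r) (deriv x r)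
            - fderiv ℝ (fun p : ℝ × ℝ × ℝ => L p.1 p.2.1 p.2.2) (r, x r, deriv x r) (0,0,1)
              * deriv x r) * T r (x r)) := by
      filter_upwards [Ioo_mem_nhds hat htb] with s hs
      rw [hNdef]
      simp only []
      rw [hev s hs, hP3 s (x s) (deriv x s)]
    have h1N : HasDerivAt (fun r =>
        fderiv ℝ (fun p : ℝ × ℝ × ℝ => L p.1 p.2.1 p.2.2) (r, x r, deriv x r) (0,0,1))
        (fderiv ℝ (fderiv ℝ (fun p : ℝ × ℝ × ℝ => L p.1 p.2.1 p.2.2))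
          (t, x t, deriv x t) (1, deriv x t, deriv (deriv x) t) (0,0,1)) t :=
      hasDerivAt_fderiv_comp3 hL (0,0,1) (hasDerivAt_id t) hx' hx''
    have h2N : HasDerivAt (fun r => L r (x r) (deriv x r))
        (1 * fderiv ℝ (fun p : ℝ × ℝ × ℝ => L p.1 p.2.1 p.2.2) (t, x t, deriv x t) (1,0,0)
          + deriv x t * fderiv ℝ (fun p : ℝ × ℝ × ℝ => L p.1 p.2.1 p.2.2)
              (t, x t, deriv x t) (0,1,0)
          + deriv (deriv x) t * fderiv ℝ (fun p : ℝ × ℝ × ℝ => L p.1 p.2.1 p.2.2)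
              (t, x t, deriv x t) (0,0,1)) t :=
      hasDerivAt_comp3 (hLd _) (hasDerivAt_id t) hx' hx''
    have hNder := ((h1N.mul hXdot).add (((h2N.sub (h1N.mul hx'')).mul hTdot))).congr_of_eventuallyEq hNev
    have hval : (fderiv ℝ (fderiv ℝ (fun p : ℝ × ℝ × ℝ => L p.1 p.2.1 p.2.2))
          (t, x t, deriv x t) (1, deriv x t, deriv (deriv x) t) (0,0,1) * X t (x t)
        + fderiv ℝ (fun p : ℝ × ℝ × ℝ => L p.1 p.2.1 p.2.2) (t, x t, deriv x t) (0,0,1)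
          * fderiv ℝ (fderiv ℝ (fun p : ℝ × ℝ × ℝ => Ψ p.1 p.2.1 p.2.2)) (t, x t, 0)
              (1, deriv x t, 0) (0,0,1))
        + ((1 * fderiv ℝ (fun p : ℝ × ℝ × ℝ => L p.1 p.2.1 p.2.2) (t, x t, deriv x t) (1,0,0)
          + deriv x t * fderiv ℝ (fun p : ℝ × ℝ × ℝ => L p.1 p.2.1 p.2.2)
              (t, x t, deriv x t) (0,1,0)
          + deriv (deriv x) t * fderiv ℝ (fun p : ℝ × ℝ × ℝ => L p.1 p.2.1 p.2.2)
              (t, x t, deriv x t) (0,0,1)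
          - (fderiv ℝ (fderiv ℝ (fun p : ℝ × ℝ × ℝ => L p.1 p.2.1 p.2.2))
              (t, x t, deriv x t) (1, deriv x t, deriv (deriv x) t) (0,0,1) * deriv x t
            + fderiv ℝ (fun p : ℝ × ℝ × ℝ => L p.1 p.2.1 p.2.2) (t, x t, deriv x t) (0,0,1)
              * deriv (deriv x) t))
          * T t (x t)
        + (L t (x t) (deriv x t)
            - fderiv ℝ (fun p : ℝ × ℝ × ℝ => L p.1 p.2.1 p.2.2) (t, x t, deriv x t) (0,0,1)
              * deriv x t)
          * fderiv ℝ (fderiv ℝ (fun p : ℝ × ℝ × ℝ => Φ p.1 p.2.1 p.2.2)) (t, x t, 0)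
              (1, deriv x t, 0) (0,0,1)) = 0 := by
      rw [hM]
      linear_combination hstar
    rw [← hval]
    exact hNder
  -- wrap-up : a function continuous on [a,b] with vanishing derivative inside is constant
  have hm : (a + b) / 2 ∈ Set.Ioo a b := ⟨by linarith, by linarith⟩
  have hpair : ∀ p q : ℝ, p ∈ Set.Ioo a b → q ∈ Set.Ioo a b → p ≤ q → N q = N p := by
    intro p q hp hq hpq
    have hsub : Set.Icc p q ⊆ Set.Ioo a b := fun s hs =>
      ⟨lt_of_lt_of_le hp.1 hs.1, lt_of_le_of_lt hs.2 hq.2⟩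
    have := constant_of_has_deriv_right_zero (f := N) (a := p) (b := q)
      (fun s hs => (hN0 s (hsub hs)).continuousAt.continuousWithinAt)
      (fun s hs => (hN0 s (hsub (Set.Ico_subset_Icc_self hs))).hasDerivWithinAt)
    exact this q ⟨hpq, le_rfl⟩
  have hIoo : ∀ t ∈ Set.Ioo a b, N t = N ((a + b) / 2) := by
    intro t ht
    rcases le_total t ((a + b) / 2) with h | h
    · exact (hpair t ((a + b) / 2) ht hm h).symm
    · exact hpair ((a + b) / 2) t hm ht h
  have hend : ∀ t ∈ Set.Icc a b, N t = N ((a + b) / 2) := by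
    intro t ht
    rcases ht.1.eq_or_lt with h | h
    · -- t = a
      subst h
      have hne : (nhdsWithin a (Set.Ioo a b)).NeBot := by
        rw [← mem_closure_iff_nhdsWithin_neBot, closure_Ioo (ne_of_lt hab)]
        exact ⟨le_rfl, le_of_lt hab⟩
      have h1 : Filter.Tendsto N (nhdsWithin a (Set.Ioo a b)) (nhds (N a)) :=
        ((hNc a ⟨le_rfl, le_of_lt hab⟩).mono Set.Ioo_subset_Icc_self)
      have heq : N =ᶠ[nhdsWithin a (Set.Ioo a b)] (fun _ => N ((a + b) / 2)) :=
        Filter.eventuallyEq_of_mem self_mem_nhdsWithin (fun s hs => hIoo s hs)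
      have h2 : Filter.Tendsto N (nhdsWithin a (Set.Ioo a b)) (nhds (N ((a + b) / 2))) :=
        Filter.Tendsto.congr' heq.symm tendsto_const_nhds
      exact tendsto_nhds_unique h1 h2
    rcases ht.2.eq_or_lt with h' | h'
    · -- t = b
      subst h'
      have hne : (nhdsWithin t (Set.Ioo a t)).NeBot := by
        rw [← mem_closure_iff_nhdsWithin_neBot, closure_Ioo (ne_of_lt h)]
        exact ⟨le_of_lt h, le_rfl⟩
      have h1 : Filter.Tendsto N (nhdsWithin t (Set.Ioo a t)) (nhds (N t)) :=
        ((hNc t ⟨le_of_lt h, le_rfl⟩).mono Set.Ioo_subset_Icc_self)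
      have heq : N =ᶠ[nhdsWithin t (Set.Ioo a t)] (fun _ => N ((a + t) / 2)) := by
        apply Filter.eventuallyEq_of_mem self_mem_nhdsWithin
        intro s hs
        have hs' : s ∈ Set.Ioo a t := hs
        have : N s = N ((a + t) / 2) := by
          rw [hIoo s ⟨hs'.1, hs'.2⟩, hIoo ((a + t) / 2) ⟨by simpa using hm.1, hm.2⟩]
        exact this
      have h2 : Filter.Tendsto N (nhdsWithin t (Set.Ioo a t)) (nhds (N ((a + t) / 2))) :=
        Filter.Tendsto.congr' heq.symm tendsto_const_nhds
      have h3 := tendsto_nhds_unique h1 h2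
      rw [h3, hIoo ((a + t) / 2) ⟨by simpa using hm.1, hm.2⟩]
    · exact hIoo t ⟨h, h'⟩
  exact ⟨N ((a + b) / 2), hend⟩
end

section
/- Let T, X : ℝ × ℝ → ℝ be C¹ functions of (t,x). The invariance identity for the Lagrangian L(t,x,v) = v², namely 2v ( ∂X/∂t (t,x) + v ∂X/∂x (t,x) − v ( ∂T/∂t (t,x) + v ∂T/∂x (t,x) ) ) + v² ( ∂T/∂t (t,x) + v ∂T/∂x (t,x) ) = 0, holds for all (t,x) ∈ ℝ × ℝ and all v ∈ ℝ if and only if there exist constants c, b₁, b₂ ∈ ℝ such that X(t,x) = c x + b₁ and T(t,x) = 2 c t + b₂ for all (t,x). -/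
/-- For the Lagrangian `L(t,x,v) = v²`, the necessary condition of invariance
`2v(Ẋ - vṪ) + v²Ṫ = 0`, with `Ṫ = ∂T/∂t + v ∂T/∂x` and `Ẋ = ∂X/∂t + v ∂X/∂x`,
holds for all `(t,x) ∈ ℝ × ℝ` and all `v ∈ ℝ` if and only if there are
constants `c, b₁, b₂ ∈ ℝ` with `X(t,x) = c x + b₁` and `T(t,x) = 2 c t + b₂`. -/
theorem invariance_generators_of_square_lagrangian
    (T X : ℝ → ℝ → ℝ)
    (hT : ContDiff ℝ 1 (fun p : ℝ × ℝ => T p.1 p.2))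
    (hX : ContDiff ℝ 1 (fun p : ℝ × ℝ => X p.1 p.2)) :
    (∀ t x v : ℝ,
        2 * v * ((deriv (fun s => X s x) t + v * deriv (fun y => X t y) x)
            - v * (deriv (fun s => T s x) t + v * deriv (fun y => T t y) x))
          + v ^ 2 * (deriv (fun s => T s x) t + v * deriv (fun y => T t y) x) = 0)
    ↔ ∃ c b₁ b₂ : ℝ, (∀ t x : ℝ, X t x = c * x + b₁)
        ∧ (∀ t x : ℝ, T t x = 2 * c * t + b₂) := by
  have hXd : Differentiable ℝ (fun p : ℝ × ℝ => X p.1 p.2) := hX.differentiable one_ne_zero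
  have hTd : Differentiable ℝ (fun p : ℝ × ℝ => T p.1 p.2) := hT.differentiable one_ne_zero
  have hX1 : ∀ x, Differentiable ℝ (fun s => X s x) := fun x =>
    hXd.comp (differentiable_id.prodMk (differentiable_const x))
  have hX2 : ∀ t, Differentiable ℝ (fun y => X t y) := fun t =>
    hXd.comp ((differentiable_const t).prodMk differentiable_id)
  have hT1 : ∀ x, Differentiable ℝ (fun s => T s x) := fun x =>
    hTd.comp (differentiable_id.prodMk (differentiable_const x))
  have hT2 : ∀ t, Differentiable ℝ (fun y => T t y) := fun t =>
    hTd.comp ((differentiable_const t).prodMk differentiable_id)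
  constructor
  · intro H
    have key : ∀ t x : ℝ, deriv (fun s => X s x) t = 0 ∧ deriv (fun y => T t y) x = 0 ∧
        2 * deriv (fun y => X t y) x = deriv (fun s => T s x) t := by
      intro t x
      have h1 := H t x 1
      have h2 := H t x (-1)
      have h3 := H t x 2
      refine ⟨by nlinarith, by nlinarith, by nlinarith⟩
    -- X is constant in t
    have hXc : ∀ t x : ℝ, X t x = X 0 x := fun t x =>
      is_const_of_deriv_eq_zero (hX1 x) (fun s => (key s x).1) t 0
    -- T is constant in x
    have hTc : ∀ t x : ℝ, T t x = T t 0 := fun t x =>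
      is_const_of_deriv_eq_zero (hT2 t) (fun y => (key t y).2.1) x 0
    set f : ℝ → ℝ := fun x => X 0 x with hf
    set g : ℝ → ℝ := fun t => T t 0 with hg
    have hkey2 : ∀ t x : ℝ, 2 * deriv f x = deriv g t := by
      intro t x
      have h := (key t x).2.2
      have e1 : (fun y => X t y) = f := funext fun y => hXc t y
      have e2 : (fun s => T s x) = g := funext fun s => hTc s x
      rw [e1, e2] at h
      exact h
    set c : ℝ := deriv f 0 with hc
    have hfc : ∀ x : ℝ, deriv f x = c := by
      intro x
      have := hkey2 0 x
      have := hkey2 0 0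
      linarith
    have hgc : ∀ t : ℝ, deriv g t = 2 * c := by
      intro t
      have := hkey2 t 0
      linarith
    have hfd : Differentiable ℝ f := hX2 0
    have hgd : Differentiable ℝ g := hT1 0
    refine ⟨c, f 0, g 0, ?_, ?_⟩
    · intro t x
      have haff : ∀ x : ℝ, f x - c * x = f 0 - c * 0 := by
        intro x
        apply is_const_of_deriv_eq_zero (f := fun x => f x - c * x)
        · exact hfd.sub (differentiable_const c |>.mul differentiable_id)
        · intro y
          have hd := (((hfd y).hasDerivAt).sub ((hasDerivAt_id' (x := y)).const_mul c)).deriv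
          rw [show (fun x => f x - c * x) = (f - fun y => c * y) from rfl, hd, hfc y]; ring
      have := haff x
      have hx := hXc t x
      simp only [hf] at this ⊢
      linarith [hXc t x]
    · intro t x
      have haff : ∀ t : ℝ, g t - 2 * c * t = g 0 - 2 * c * 0 := by
        intro t
        apply is_const_of_deriv_eq_zero (f := fun t => g t - 2 * c * t)
        · exact hgd.sub (differentiable_const (2*c) |>.mul differentiable_id)
        · intro s
          have hd := (((hgd s).hasDerivAt).sub ((hasDerivAt_id' (x := s)).const_mul (2*c))).deriv
          rw [show (fun t => g t - 2 * c * t) = (g - fun y => 2 * c * y) from rfl, hd, hgc s]; ring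
      have := haff t
      simp only [hg] at this ⊢
      linarith [hTc t x]
  · rintro ⟨c, b₁, b₂, hXf, hTf⟩ t x v
    have e1 : (fun s => X s x) = fun _ => c * x + b₁ := funext fun s => hXf s x
    have e2 : (fun y => X t y) = fun y => c * y + b₁ := funext fun y => hXf t y
    have e3 : (fun s => T s x) = fun s => 2 * c * s + b₂ := funext fun s => hTf s x
    have e4 : (fun y => T t y) = fun _ => 2 * c * t + b₂ := funext fun y => hTf t y
    rw [e1, e2, e3, e4]
    have d2 : deriv (fun y => c * y + b₁) x = c := by
      simpa using (((hasDerivAt_id x).const_mul c).add_const b₁).deriv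
    have d3 : deriv (fun s => 2 * c * s + b₂) t = 2 * c := by
      simpa using (((hasDerivAt_id t).const_mul (2 * c)).add_const b₂).deriv
    rw [d2, d3, deriv_const, deriv_const]
    ring
end

section
/- If X and Y are real-valued S1-processes on I and μ = ±1, then for all t ∈ I: (i) d/dt E[X(t) Y(t)] = E[ Re(𝒟_μ X(t)) · Y(t) + X(t) · Re(𝒟_μ Y(t)) ], and (ii) E[ Im(𝒟_μ X(t)) · Y(t) ] = E[ X(t) · Im(𝒟_μ Y(t)) ]. -/
open MeasureTheory Filter Set

/-- An S1-process on the open interval `I = (a,b)` with values in a Banach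
space `E`: a stochastic process with continuous sample paths on `Ī = [a,b]`,
adapted to the increasing filtration `Pfil` and to the decreasing filtration `Ffil`,
square integrable and `L²`-continuous in `t`, whose forward Nelson derivative
`D X(t) = lim_{h→0⁺} h⁻¹ E[X(t+h) - X(t) | Pfil_t]` and backward Nelson
derivative `D* X(t) = lim_{h→0⁺} h⁻¹ E[X(t) - X(t-h) | Ffil_t]` exist in `L²(Ω)`
for every `t ∈ I` and are `L²`-continuous in `t`.  The fields `D` and `Dstar`
record the Nelson derivatives. -/
structure S1Process {Ω : Type*} [m0 : MeasurableSpace Ω] (P : Measure Ω)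
    (Pfil Ffil : ℝ → MeasurableSpace Ω) (a b : ℝ)
    (E : Type*) [NormedAddCommGroup E] [NormedSpace ℝ E] [CompleteSpace E] where
  toFun : ℝ → Ω → E
  D : ℝ → Ω → E
  Dstar : ℝ → Ω → E
  cont_paths : ∀ ω : Ω, ContinuousOn (fun t => toFun t ω) (Set.Icc a b)
  adapted_P : ∀ t ∈ Set.Icc a b, StronglyMeasurable[Pfil t] (toFun t)
  adapted_F : ∀ t ∈ Set.Icc a b, StronglyMeasurable[Ffil t] (toFun t)
  memL2 : ∀ t ∈ Set.Icc a b, MemLp (toFun t) 2 P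
  contL2 : ∀ t ∈ Set.Icc a b,
    Tendsto (fun s => eLpNorm (toFun s - toFun t) 2 P)
      (nhdsWithin t (Set.Icc a b)) (nhds 0)
  memL2_D : ∀ t ∈ Set.Ioo a b, MemLp (D t) 2 P
  memL2_Dstar : ∀ t ∈ Set.Ioo a b, MemLp (Dstar t) 2 P
  hasD : ∀ t ∈ Set.Ioo a b,
    Tendsto (fun h : ℝ =>
        eLpNorm (fun ω => h⁻¹ • (P[toFun (t + h) - toFun t | Pfil t]) ω - D t ω) 2 P)
      (nhdsWithin 0 (Set.Ioi 0)) (nhds 0)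
  hasDstar : ∀ t ∈ Set.Ioo a b,
    Tendsto (fun h : ℝ =>
        eLpNorm (fun ω => h⁻¹ • (P[toFun t - toFun (t - h) | Ffil t]) ω - Dstar t ω) 2 P)
      (nhdsWithin 0 (Set.Ioi 0)) (nhds 0)
  contL2_D : ∀ t ∈ Set.Ioo a b,
    Tendsto (fun s => eLpNorm (D s - D t) 2 P) (nhdsWithin t (Set.Ioo a b)) (nhds 0)
  contL2_Dstar : ∀ t ∈ Set.Ioo a b,
    Tendsto (fun s => eLpNorm (Dstar s - Dstar t) 2 P) (nhdsWithin t (Set.Ioo a b)) (nhds 0)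

/-- The complex Nelson derivative `𝒟_μ = (D + D*)/2 + iμ(D - D*)/2` of a
real-valued S1-process, for `μ = ±1`. -/
noncomputable def S1Process.Dc {Ω : Type*} [m0 : MeasurableSpace Ω] {P : Measure Ω}
    {Pfil Ffil : ℝ → MeasurableSpace Ω} {a b : ℝ}
    (X : S1Process P Pfil Ffil a b ℝ) (μ : ℝ) : ℝ → Ω → ℂ :=
  fun t ω => ((X.D t ω + X.Dstar t ω : ℝ) : ℂ) / 2
    + Complex.I * (μ : ℂ) * (((X.D t ω - X.Dstar t ω : ℝ) : ℂ) / 2)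

section helpers
variable {Ω : Type*} [m0 : MeasurableSpace Ω] {P : Measure Ω} [IsProbabilityMeasure P]


lemma l2_integrable_mul {f g : Ω → ℝ} (hf : MemLp f 2 P) (hg : MemLp g 2 P) :
    Integrable (fun ω => f ω * g ω) P := by
  have h := MeasureTheory.L2.integrable_inner (𝕜 := ℝ) (hf.toLp f) (hg.toLp g)
  refine h.congr ?_
  filter_upwards [hf.coeFn_toLp, hg.coeFn_toLp] with ω h1 h2
  simp [h1, h2, RCLike.inner_apply, mul_comm]

lemma l2_cs {f g : Ω → ℝ} (hf : MemLp f 2 P) (hg : MemLp g 2 P) :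
    |∫ ω, f ω * g ω ∂P| ≤ (eLpNorm f 2 P).toReal * (eLpNorm g 2 P).toReal := by
  have h1 : ∫ ω, f ω * g ω ∂P = inner (𝕜 := ℝ) (hf.toLp f) (hg.toLp g) := by
    rw [MeasureTheory.L2.inner_def]
    refine (integral_congr_ae ?_)
    filter_upwards [hf.coeFn_toLp, hg.coeFn_toLp] with ω h1 h2
    simp [h1, h2, RCLike.inner_apply, mul_comm]
  rw [h1]
  calc |inner (𝕜 := ℝ) (hf.toLp f) (hg.toLp g)| ≤ ‖hf.toLp f‖ * ‖hg.toLp g‖ :=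
        abs_real_inner_le_norm _ _
    _ = _ := by rw [Lp.norm_toLp, Lp.norm_toLp]

lemma integral_mul_condexp {m : MeasurableSpace Ω} (hm : m ≤ m0)
    {g f : Ω → ℝ} (hgm : StronglyMeasurable[m] g) (hg : MemLp g 2 P) (hf : MemLp f 2 P) :
    ∫ ω, g ω * (P[f|m]) ω ∂P = ∫ ω, g ω * f ω ∂P := by
  have hint : Integrable (g * f) P := l2_integrable_mul (m0 := m0) hg hf
  have h := @condExp_mul_of_stronglyMeasurable_left Ω m m0 P g f hgm hint (hf.integrable one_le_two)
  calc ∫ ω, g ω * (P[f|m]) ω ∂P = ∫ ω, (P[g * f|m]) ω ∂P := (integral_congr_ae h).symm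
    _ = ∫ ω, (g * f) ω ∂P := integral_condExp hm
    _ = ∫ ω, g ω * f ω ∂P := rfl

lemma toReal_tendsto_zero {ι : Type*} {l : Filter ι} {F : ι → ENNReal} (h : Tendsto F l (nhds 0)) :
    Tendsto (fun i => (F i).toReal) l (nhds 0) := by
  have := (ENNReal.tendsto_toReal (a := 0) (by simp)).comp h
  simp only [ENNReal.toReal_zero] at this; exact this




lemma pair_continuousWithinAt {Z : ℝ → Ω → ℝ} {W : Ω → ℝ} {S : Set ℝ} {r : ℝ}
    (hZmem : ∀ s ∈ S, MemLp (Z s) 2 P) (hW : MemLp W 2 P) (hr : r ∈ S)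
    (hcont : Tendsto (fun s => eLpNorm (Z s - Z r) 2 P) (nhdsWithin r S) (nhds 0)) :
    ContinuousWithinAt (fun s => ∫ ω, W ω * Z s ω ∂P) S r := by
  have hint : ∀ s ∈ S, Integrable (fun ω => W ω * Z s ω) P :=
    fun s hs => l2_integrable_mul hW (hZmem s hs)
  rw [ContinuousWithinAt, tendsto_iff_dist_tendsto_zero]
  apply squeeze_zero' (Eventually.of_forall fun _ => dist_nonneg)
    (g := fun s => (eLpNorm W 2 P).toReal * (eLpNorm (Z s - Z r) 2 P).toReal)
  · filter_upwards [self_mem_nhdsWithin] with s hs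
    have h1 : ∫ ω, W ω * Z s ω ∂P - ∫ ω, W ω * Z r ω ∂P
        = ∫ ω, W ω * (Z s ω - Z r ω) ∂P := by
      rw [← integral_sub (hint s hs) (hint r hr)]
      congr 1; funext ω; ring
    rw [Real.dist_eq, h1]
    exact l2_cs hW ((hZmem s hs).sub (hZmem r hr))
  · simpa using (toReal_tendsto_zero hcont).const_mul (eLpNorm W 2 P).toReal
lemma mvt_left {f g : ℝ → ℝ} {C s v : ℝ} (hsv : s ≤ v)
    (hf : ContinuousOn f (Icc s v))
    (hd : ∀ r ∈ Ioc s v, HasDerivWithinAt f (g r) (Iic r) r)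
    (hb : ∀ r ∈ Ioc s v, |g r| ≤ C) :
    |f v - f s| ≤ C * (v - s) := by
  set F : ℝ → ℝ := fun x => f (s + v - x) with hF
  have hσcont : ContinuousOn (fun x : ℝ => s + v - x) (Icc s v) :=
    (continuous_const.sub continuous_id).continuousOn
  have hσmaps : MapsTo (fun x : ℝ => s + v - x) (Icc s v) (Icc s v) := by
    intro x hx
    simp only [mem_Icc] at hx ⊢
    constructor <;> linarith [hx.1, hx.2]
  have hFcont : ContinuousOn F (Icc s v) := hf.comp hσcont hσmaps
  have hFd : ∀ x ∈ Ico s v, HasDerivWithinAt F (-(g (s + v - x))) (Ici x) x := by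
    intro x hx
    simp only [mem_Ico] at hx
    have hmem : s + v - x ∈ Ioc s v := ⟨by linarith [hx.2], by linarith [hx.1]⟩
    have hσ : HasDerivWithinAt (fun x : ℝ => s + v - x) (-1) (Ici x) x :=
      ((hasDerivAt_id x).const_sub (s + v)).hasDerivWithinAt
    have hmaps : MapsTo (fun x : ℝ => s + v - x) (Ici x) (Iic (s + v - x)) := by
      intro y hy
      simp only [mem_Ici] at hy
      simp only [mem_Iic]
      linarith
    have hcomp := (hd _ hmem).comp x hσ hmaps
    simp [mul_comm] at hcomp; exact hcomp
  have hbound : ∀ x ∈ Ico s v, ‖-(g (s + v - x))‖ ≤ C := by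
    intro x hx
    simp only [mem_Ico] at hx
    rw [norm_neg, Real.norm_eq_abs]
    exact hb _ ⟨by linarith [hx.2], by linarith [hx.1]⟩
  have h := norm_image_sub_le_of_norm_deriv_right_le_segment hFcont hFd hbound v
    (right_mem_Icc.2 hsv)
  have hFv : F v = f s := by simp [hF]
  have hFs : F s = f v := by
    simp only [hF]
    congr 1
    ring
  rw [hFv, hFs, Real.norm_eq_abs, abs_sub_comm] at h
  exact h

end helpers

section derivhelpers
variable {Ω : Type*} [m0 : MeasurableSpace Ω] {P : Measure Ω} [IsProbabilityMeasure P]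
variable {Pfil Ffil : ℝ → MeasurableSpace Ω} {a b : ℝ}


lemma hasDerivWithinAt_pair_left
    (hF_le : ∀ t, Ffil t ≤ m0)
    (X : S1Process P Pfil Ffil a b ℝ) {W : Ω → ℝ} (hW : MemLp W 2 P)
    {r : ℝ} (hr : r ∈ Ioo a b) (hWm : StronglyMeasurable[Ffil r] W) :
    HasDerivWithinAt (fun ρ => ∫ ω, W ω * X.toFun ρ ω ∂P)
      (∫ ω, W ω * X.Dstar r ω ∂P) (Iic r) r := by
  set f : ℝ → ℝ := fun ρ => ∫ ω, W ω * X.toFun ρ ω ∂P with hf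
  set L : ℝ := ∫ ω, W ω * X.Dstar r ω ∂P with hL
  rw [hasDerivWithinAt_iff_tendsto_slope, Iic_diff_right]
  have hmap : Tendsto (fun y => r - y) (nhdsWithin r (Iio r)) (nhdsWithin 0 (Ioi 0)) := by
    apply tendsto_nhdsWithin_of_tendsto_nhds_of_eventually_within
    · have : Tendsto (fun y : ℝ => r - y) (nhds r) (nhds (r - r)) :=
        tendsto_const_nhds.sub tendsto_id
      rw [sub_self] at this
      exact this.mono_left nhdsWithin_le_nhds
    · filter_upwards [self_mem_nhdsWithin] with y hy
      exact sub_pos.2 (mem_Iio.1 hy)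
  have hkey : Tendsto (fun h : ℝ => slope f r (r - h)) (nhdsWithin 0 (Ioi 0)) (nhds L) := by
    rw [tendsto_iff_dist_tendsto_zero]
    apply squeeze_zero' (Eventually.of_forall fun _ => dist_nonneg)
      (g := fun h => (eLpNorm W 2 P).toReal *
        (eLpNorm (fun ω => h⁻¹ • (P[X.toFun r - X.toFun (r - h) | Ffil r]) ω - X.Dstar r ω)
          2 P).toReal)
    · have e1 : Ioo (0:ℝ) (r - a) ∈ nhdsWithin (0:ℝ) (Ioi 0) :=
        Ioo_mem_nhdsGT (sub_pos.2 hr.1)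
      have e3 : ∀ᶠ h : ℝ in nhdsWithin 0 (Ioi 0),
          eLpNorm (fun ω => h⁻¹ • (P[X.toFun r - X.toFun (r - h) | Ffil r]) ω - X.Dstar r ω)
            2 P < 1 :=
        (X.hasDstar r hr).eventually_lt_const (by norm_num)
      filter_upwards [e1, e3] with h hh hE
      obtain ⟨h0, hra⟩ := hh
      have hrh : r - h ∈ Ioo a b := ⟨by linarith, by linarith [hr.2]⟩
      have hrI : r ∈ Icc a b := ⟨hr.1.le, hr.2.le⟩
      have hrhI : r - h ∈ Icc a b := ⟨hrh.1.le, hrh.2.le⟩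
      set Δ : Ω → ℝ := X.toFun r - X.toFun (r - h) with hΔdef
      have hΔ : MemLp Δ 2 P := (X.memL2 r hrI).sub (X.memL2 (r - h) hrhI)
      set Cf : Ω → ℝ := P[Δ | Ffil r] with hCdef
      set Ef : Ω → ℝ := fun ω => h⁻¹ • Cf ω - X.Dstar r ω with hEdef
      have hD2 : MemLp (X.Dstar r) 2 P := X.memL2_Dstar r hr
      have hE2 : MemLp Ef 2 P := by
        refine ⟨AEStronglyMeasurable.sub ?_ hD2.aestronglyMeasurable, ?_⟩
        · exact ((stronglyMeasurable_condExp.mono (hF_le r)).aestronglyMeasurable).const_smul h⁻¹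
        · exact lt_trans hE (by norm_num)
      have hC2 : MemLp (fun ω => h⁻¹ • Cf ω) 2 P := by
        have h' : (fun ω => Ef ω + X.Dstar r ω) = fun ω => h⁻¹ • Cf ω := by
          funext ω; simp [hEdef]
        exact h' ▸ hE2.add hD2
      -- step A : f r - f (r - h) = ∫ W * Δ
      have hA : f r - f (r - h) = ∫ ω, W ω * Δ ω ∂P := by
        rw [hf, ← integral_sub (l2_integrable_mul hW (X.memL2 r hrI))
          (l2_integrable_mul hW (X.memL2 (r - h) hrhI))]
        congr 1; funext ω; simp [hΔdef]; ring
      -- step B : pull out conditional expectation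
      have hB : ∫ ω, W ω * Δ ω ∂P = ∫ ω, W ω * Cf ω ∂P :=
        (integral_mul_condexp (hF_le r) hWm hW hΔ).symm
      -- slope computation
      have hslope : slope f r (r - h) - L = ∫ ω, W ω * Ef ω ∂P := by
        have h1 : slope f r (r - h) = h⁻¹ * (f r - f (r - h)) := by
          have hne : h ≠ 0 := ne_of_gt h0
          rw [slope_def_field]
          field_simp
          rw [show r - h - r = -h by ring, div_neg, mul_div_cancel_left₀ _ hne]
          ring
        rw [h1, hA, hB]
        have h2 : h⁻¹ * ∫ ω, W ω * Cf ω ∂P = ∫ ω, W ω * (h⁻¹ • Cf ω) ∂P := by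
          rw [← integral_const_mul]
          congr 1; funext ω; simp; ring
        rw [h2, hL, ← integral_sub (l2_integrable_mul hW hC2) (l2_integrable_mul hW hD2)]
        congr 1; funext ω; simp [hEdef]; ring
      rw [Real.dist_eq, hslope]
      exact l2_cs hW hE2
    · simpa using (toReal_tendsto_zero (X.hasDstar r hr)).const_mul (eLpNorm W 2 P).toReal
  have hcomp := hkey.comp hmap
  refine hcomp.congr' ?_ |>.mono_left le_rfl
  · filter_upwards [] with y
    simp [Function.comp, sub_sub_cancel]

lemma hasDerivWithinAt_pair_right
    (hP_le : ∀ t, Pfil t ≤ m0)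
    (X : S1Process P Pfil Ffil a b ℝ) {W : Ω → ℝ} (hW : MemLp W 2 P)
    {r : ℝ} (hr : r ∈ Ioo a b) (hWm : StronglyMeasurable[Pfil r] W) :
    HasDerivWithinAt (fun ρ => ∫ ω, W ω * X.toFun ρ ω ∂P)
      (∫ ω, W ω * X.D r ω ∂P) (Ici r) r := by
  set f : ℝ → ℝ := fun ρ => ∫ ω, W ω * X.toFun ρ ω ∂P with hf
  set L : ℝ := ∫ ω, W ω * X.D r ω ∂P with hL
  rw [hasDerivWithinAt_iff_tendsto_slope, Ici_sdiff_left]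
  have hmap : Tendsto (fun y => y - r) (nhdsWithin r (Ioi r)) (nhdsWithin 0 (Ioi 0)) := by
    apply tendsto_nhdsWithin_of_tendsto_nhds_of_eventually_within
    · have : Tendsto (fun y : ℝ => y - r) (nhds r) (nhds (r - r)) :=
        tendsto_id.sub tendsto_const_nhds
      rw [sub_self] at this
      exact this.mono_left nhdsWithin_le_nhds
    · filter_upwards [self_mem_nhdsWithin] with y hy
      exact sub_pos.2 (mem_Ioi.1 hy)
  have hkey : Tendsto (fun h : ℝ => slope f r (r + h)) (nhdsWithin 0 (Ioi 0)) (nhds L) := by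
    rw [tendsto_iff_dist_tendsto_zero]
    apply squeeze_zero' (Eventually.of_forall fun _ => dist_nonneg)
      (g := fun h => (eLpNorm W 2 P).toReal *
        (eLpNorm (fun ω => h⁻¹ • (P[X.toFun (r + h) - X.toFun r | Pfil r]) ω - X.D r ω)
          2 P).toReal)
    · have e1 : Ioo (0:ℝ) (b - r) ∈ nhdsWithin (0:ℝ) (Ioi 0) :=
        Ioo_mem_nhdsGT (sub_pos.2 hr.2)
      have e3 : ∀ᶠ h : ℝ in nhdsWithin 0 (Ioi 0),
          eLpNorm (fun ω => h⁻¹ • (P[X.toFun (r + h) - X.toFun r | Pfil r]) ω - X.D r ω)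
            2 P < 1 :=
        (X.hasD r hr).eventually_lt_const (by norm_num)
      filter_upwards [e1, e3] with h hh hE
      obtain ⟨h0, hrb⟩ := hh
      have hne : h ≠ 0 := ne_of_gt h0
      have hrh : r + h ∈ Ioo a b := ⟨by linarith [hr.1], by linarith⟩
      have hrI : r ∈ Icc a b := ⟨hr.1.le, hr.2.le⟩
      have hrhI : r + h ∈ Icc a b := ⟨hrh.1.le, hrh.2.le⟩
      set Δ : Ω → ℝ := X.toFun (r + h) - X.toFun r with hΔdef
      have hΔ : MemLp Δ 2 P := (X.memL2 (r + h) hrhI).sub (X.memL2 r hrI)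
      set Cf : Ω → ℝ := P[Δ | Pfil r] with hCdef
      set Ef : Ω → ℝ := fun ω => h⁻¹ • Cf ω - X.D r ω with hEdef
      have hD2 : MemLp (X.D r) 2 P := X.memL2_D r hr
      have hE2 : MemLp Ef 2 P := by
        refine ⟨AEStronglyMeasurable.sub ?_ hD2.aestronglyMeasurable, ?_⟩
        · exact ((stronglyMeasurable_condExp.mono (hP_le r)).aestronglyMeasurable).const_smul h⁻¹
        · exact lt_trans hE (by norm_num)
      have hC2 : MemLp (fun ω => h⁻¹ • Cf ω) 2 P := by
        have h' : (fun ω => Ef ω + X.D r ω) = fun ω => h⁻¹ • Cf ω := by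
          funext ω; simp [hEdef]
        exact h' ▸ hE2.add hD2
      have hA : f (r + h) - f r = ∫ ω, W ω * Δ ω ∂P := by
        rw [hf, ← integral_sub (l2_integrable_mul hW (X.memL2 (r + h) hrhI))
          (l2_integrable_mul hW (X.memL2 r hrI))]
        congr 1; funext ω; simp [hΔdef]; ring
      have hB : ∫ ω, W ω * Δ ω ∂P = ∫ ω, W ω * Cf ω ∂P :=
        (integral_mul_condexp (hP_le r) hWm hW hΔ).symm
      have hslope : slope f r (r + h) - L = ∫ ω, W ω * Ef ω ∂P := by
        have h1 : slope f r (r + h) = h⁻¹ * (f (r + h) - f r) := by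
          rw [slope_def_field]
          rw [show r + h - r = h by ring]
          rw [div_eq_inv_mul]
        rw [h1, hA, hB]
        have h2 : h⁻¹ * ∫ ω, W ω * Cf ω ∂P = ∫ ω, W ω * (h⁻¹ • Cf ω) ∂P := by
          rw [← integral_const_mul]
          congr 1; funext ω; simp; ring
        rw [h2, hL, ← integral_sub (l2_integrable_mul hW hC2) (l2_integrable_mul hW hD2)]
        congr 1; funext ω; simp [hEdef]; ring
      rw [Real.dist_eq, hslope]
      exact l2_cs hW hE2
    · simpa using (toReal_tendsto_zero (X.hasD r hr)).const_mul (eLpNorm W 2 P).toReal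
  have hcomp := hkey.comp hmap
  refine hcomp.congr' ?_ |>.mono_left le_rfl
  · filter_upwards [] with y
    simp [Function.comp]

lemma pair_continuousOn (X : S1Process P Pfil Ffil a b ℝ) {W : Ω → ℝ} (hW : MemLp W 2 P)
    {s v : ℝ} (hsub : Icc s v ⊆ Icc a b) :
    ContinuousOn (fun r => ∫ ω, W ω * X.toFun r ω ∂P) (Icc s v) := by
  intro r hr
  exact pair_continuousWithinAt (fun s' hs' => X.memL2 s' (hsub hs')) hW hr
    ((X.contL2 r (hsub hr)).mono_left (nhdsWithin_mono _ hsub))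

lemma seg_left (hF_le : ∀ t, Ffil t ≤ m0)
    (X : S1Process P Pfil Ffil a b ℝ) {W : Ω → ℝ} (hW : MemLp W 2 P)
    {s v : ℝ} (hsv : s ≤ v) (hsub : Icc s v ⊆ Ioo a b)
    (hWm : ∀ r ∈ Ioc s v, StronglyMeasurable[Ffil r] W)
    {c C : ℝ} (hbound : ∀ r ∈ Ioc s v, |(∫ ω, W ω * X.Dstar r ω ∂P) - c| ≤ C) :
    |((∫ ω, W ω * X.toFun v ω ∂P) - (∫ ω, W ω * X.toFun s ω ∂P)) - (v - s) * c|
      ≤ C * (v - s) := by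
  set f : ℝ → ℝ := fun r => (∫ ω, W ω * X.toFun r ω ∂P) - r * c with hfdef
  have hsub' : Icc s v ⊆ Icc a b := hsub.trans Ioo_subset_Icc_self
  have hfc : ContinuousOn f (Icc s v) :=
    (pair_continuousOn X hW hsub').sub ((continuous_id.mul continuous_const).continuousOn)
  have hfd : ∀ r ∈ Ioc s v, HasDerivWithinAt f ((∫ ω, W ω * X.Dstar r ω ∂P) - c) (Iic r) r := by
    intro r hr
    have hrIoo : r ∈ Ioo a b := hsub (Ioc_subset_Icc_self hr)
    exact (hasDerivWithinAt_pair_left hF_le X hW hrIoo (hWm r hr)).sub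
      ((hasDerivAt_mul_const c).hasDerivWithinAt)
  have h := mvt_left hsv hfc hfd hbound
  have : f v - f s = ((∫ ω, W ω * X.toFun v ω ∂P) - (∫ ω, W ω * X.toFun s ω ∂P))
      - (v - s) * c := by simp [hfdef]; ring
  rwa [this] at h

lemma seg_right (hP_le : ∀ t, Pfil t ≤ m0)
    (X : S1Process P Pfil Ffil a b ℝ) {W : Ω → ℝ} (hW : MemLp W 2 P)
    {s v : ℝ} (hsv : s ≤ v) (hsub : Icc s v ⊆ Ioo a b)
    (hWm : ∀ r ∈ Ico s v, StronglyMeasurable[Pfil r] W)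
    {c C : ℝ} (hC : 0 ≤ C)
    (hbound : ∀ r ∈ Ico s v, |(∫ ω, W ω * X.D r ω ∂P) - c| ≤ C) :
    |((∫ ω, W ω * X.toFun v ω ∂P) - (∫ ω, W ω * X.toFun s ω ∂P)) - (v - s) * c|
      ≤ C * (v - s) := by
  set f : ℝ → ℝ := fun r => (∫ ω, W ω * X.toFun r ω ∂P) - r * c with hfdef
  have hsub' : Icc s v ⊆ Icc a b := hsub.trans Ioo_subset_Icc_self
  have hfc : ContinuousOn f (Icc s v) :=
    (pair_continuousOn X hW hsub').sub ((continuous_id.mul continuous_const).continuousOn)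
  have hfd : ∀ r ∈ Ico s v, HasDerivWithinAt f ((∫ ω, W ω * X.D r ω ∂P) - c) (Ici r) r := by
    intro r hr
    have hrIoo : r ∈ Ioo a b := hsub (Ico_subset_Icc_self hr)
    exact (hasDerivWithinAt_pair_right hP_le X hW hrIoo (hWm r hr)).sub
      ((hasDerivAt_mul_const c).hasDerivWithinAt)
  have hbound' : ∀ r ∈ Ico s v, ‖(∫ ω, W ω * X.D r ω ∂P) - c‖ ≤ C := by
    intro r hr; rw [Real.norm_eq_abs]; exact hbound r hr
  have h := norm_image_sub_le_of_norm_deriv_right_le_segment hfc hfd hbound' v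
    (right_mem_Icc.2 hsv)
  rw [Real.norm_eq_abs] at h
  have : f v - f s = ((∫ ω, W ω * X.toFun v ω ∂P) - (∫ ω, W ω * X.toFun s ω ∂P))
      - (v - s) * c := by simp [hfdef]; ring
  rwa [this] at h

lemma ntoReal_le {f g h : Ω → ℝ} (hfgh : f = g + h) (hg : MemLp g 2 P) (hh : MemLp h 2 P) :
    (eLpNorm f 2 P).toReal ≤ (eLpNorm g 2 P).toReal + (eLpNorm h 2 P).toReal := by
  refine ENNReal.toReal_le_add ?_ hg.2.ne hh.2.ne
  rw [hfgh]
  exact eLpNorm_add_le hg.aestronglyMeasurable hh.aestronglyMeasurable one_le_two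

lemma unif {G H : ℝ → Ω → ℝ} {t : ℝ} (ht : t ∈ Ioo a b)
    (hGmem : ∀ s ∈ Icc a b, MemLp (G s) 2 P)
    (hGcont : Tendsto (fun s => eLpNorm (G s - G t) 2 P) (nhdsWithin t (Icc a b)) (nhds 0))
    (hHmem : ∀ s ∈ Ioo a b, MemLp (H s) 2 P)
    (hHcont : Tendsto (fun s => eLpNorm (H s - H t) 2 P) (nhdsWithin t (Ioo a b)) (nhds 0))
    {ε : ℝ} (hε : 0 < ε) :
    ∃ δ > 0, Icc (t - δ) (t + δ) ⊆ Ioo a b ∧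
      ∀ r ∈ Icc (t - δ) (t + δ), ∀ w ∈ Icc (t - δ) (t + δ),
        |(∫ ω, G w ω * H r ω ∂P) - ∫ ω, G t ω * H t ω ∂P| ≤ ε := by
  have htI : t ∈ Icc a b := Ioo_subset_Icc_self ht
  set MG : ℝ := (eLpNorm (G t) 2 P).toReal with hMG
  set MH : ℝ := (eLpNorm (H t) 2 P).toReal with hMH
  have hMG0 : 0 ≤ MG := ENNReal.toReal_nonneg
  have hMH0 : 0 ≤ MH := ENNReal.toReal_nonneg
  set η : ℝ := min 1 (ε / (MG + MH + 2)) with hη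
  have hη0 : 0 < η := lt_min one_pos (div_pos hε (by linarith))
  have hη1 : η ≤ 1 := min_le_left _ _
  have hηε : η * (MG + MH + 2) ≤ ε := by
    have h1 : η ≤ ε / (MG + MH + 2) := min_le_right _ _
    calc η * (MG + MH + 2) ≤ (ε / (MG + MH + 2)) * (MG + MH + 2) := by
          apply mul_le_mul_of_nonneg_right h1; linarith
      _ = ε := by field_simp
  have hGev : ∀ᶠ s in nhdsWithin t (Ioo a b), (eLpNorm (G s - G t) 2 P).toReal < η := by
    have := (toReal_tendsto_zero hGcont).mono_left (nhdsWithin_mono _ Ioo_subset_Icc_self)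
    exact this.eventually_lt_const hη0
  have hHev : ∀ᶠ s in nhdsWithin t (Ioo a b), (eLpNorm (H s - H t) 2 P).toReal < η :=
    (toReal_tendsto_zero hHcont).eventually_lt_const hη0
  have hcomb := hGev.and hHev
  rw [eventually_nhdsWithin_iff, Metric.eventually_nhds_iff] at hcomb
  obtain ⟨δ₀, hδ₀, hprop⟩ := hcomb
  set δ : ℝ := min (δ₀ / 2) (min ((t - a) / 2) ((b - t) / 2)) with hδdef
  have hδ : 0 < δ := by
    apply lt_min (by linarith)
    apply lt_min
    · have := ht.1; linarith
    · have := ht.2; linarith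
  refine ⟨δ, hδ, ?_, ?_⟩
  · intro x hx
    simp only [mem_Icc] at hx
    have h1 : δ ≤ (t - a) / 2 := le_trans (min_le_right _ _) (min_le_left _ _)
    have h2 : δ ≤ (b - t) / 2 := le_trans (min_le_right _ _) (min_le_right _ _)
    constructor
    · have := ht.1; nlinarith [hx.1]
    · have := ht.2; nlinarith [hx.2]
  · intro r hr w hw
    have hsub : Icc (t - δ) (t + δ) ⊆ Ioo a b := by
      intro x hx
      simp only [mem_Icc] at hx
      have h1 : δ ≤ (t - a) / 2 := le_trans (min_le_right _ _) (min_le_left _ _)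
      have h2 : δ ≤ (b - t) / 2 := le_trans (min_le_right _ _) (min_le_right _ _)
      constructor
      · have := ht.1; nlinarith [hx.1]
      · have := ht.2; nlinarith [hx.2]
    have hrO : r ∈ Ioo a b := hsub hr
    have hwO : w ∈ Ioo a b := hsub hw
    have hδ₀' : ∀ x ∈ Icc (t - δ) (t + δ), dist x t < δ₀ := by
      intro x hx
      simp only [mem_Icc] at hx
      rw [Real.dist_eq, abs_lt]
      have : δ ≤ δ₀ / 2 := min_le_left _ _
      constructor <;> linarith [hx.1, hx.2]
    have hG1 : (eLpNorm (G w - G t) 2 P).toReal < η := (hprop (hδ₀' w hw) hwO).1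
    have hH1 : (eLpNorm (H r - H t) 2 P).toReal < η := (hprop (hδ₀' r hr) hrO).2
    have hGw : MemLp (G w) 2 P := hGmem w (Ioo_subset_Icc_self hwO)
    have hGt : MemLp (G t) 2 P := hGmem t htI
    have hHr : MemLp (H r) 2 P := hHmem r hrO
    have hHt : MemLp (H t) 2 P := hHmem t ht
    have hNHr : (eLpNorm (H r) 2 P).toReal ≤ MH + η := by
      have h := ntoReal_le (f := H r) (g := H r - H t) (h := H t) (by funext ω; simp)
        (hHr.sub hHt) hHt
      rw [← hMH] at h
      linarith
    have e1 : ∫ ω, (G w ω - G t ω) * H r ω ∂P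
        = (∫ ω, G w ω * H r ω ∂P) - ∫ ω, G t ω * H r ω ∂P := by
      rw [← integral_sub (l2_integrable_mul hGw hHr) (l2_integrable_mul hGt hHr)]
      congr 1; funext ω; ring
    have e2 : ∫ ω, G t ω * (H r ω - H t ω) ∂P
        = (∫ ω, G t ω * H r ω ∂P) - ∫ ω, G t ω * H t ω ∂P := by
      rw [← integral_sub (l2_integrable_mul hGt hHr) (l2_integrable_mul hGt hHt)]
      congr 1; funext ω; ring
    have key : (∫ ω, G w ω * H r ω ∂P) - ∫ ω, G t ω * H t ω ∂P
        = (∫ ω, (G w ω - G t ω) * H r ω ∂P) + ∫ ω, G t ω * (H r ω - H t ω) ∂P := by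
      rw [e1, e2]; ring
    rw [key]
    have b1 : |∫ ω, (G w ω - G t ω) * H r ω ∂P|
        ≤ (eLpNorm (G w - G t) 2 P).toReal * (eLpNorm (H r) 2 P).toReal :=
      l2_cs (hGw.sub hGt) hHr
    have b2 : |∫ ω, G t ω * (H r ω - H t ω) ∂P|
        ≤ MG * (eLpNorm (H r - H t) 2 P).toReal :=
      l2_cs hGt (hHr.sub hHt)
    have hNH0 : 0 ≤ (eLpNorm (H r) 2 P).toReal := ENNReal.toReal_nonneg
    have hNG0 : 0 ≤ (eLpNorm (G w - G t) 2 P).toReal := ENNReal.toReal_nonneg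
    have hNHH0 : 0 ≤ (eLpNorm (H r - H t) 2 P).toReal := ENNReal.toReal_nonneg
    calc |(∫ ω, (G w ω - G t ω) * H r ω ∂P) + ∫ ω, G t ω * (H r ω - H t ω) ∂P|
        ≤ |∫ ω, (G w ω - G t ω) * H r ω ∂P| + |∫ ω, G t ω * (H r ω - H t ω) ∂P| :=
          abs_add_le _ _
      _ ≤ ε := by nlinarith [b1, b2, hG1, hH1, hNHr, hη1, hηε]

lemma key (hP_mono : Monotone Pfil) (hP_le : ∀ t, Pfil t ≤ m0)
    (hF_anti : Antitone Ffil) (hF_le : ∀ t, Ffil t ≤ m0)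
    (X Y : S1Process P Pfil Ffil a b ℝ) {t : ℝ} (ht : t ∈ Ioo a b) :
    HasDerivAt (fun s => ∫ ω, X.toFun s ω * Y.toFun s ω ∂P)
      ((∫ ω, Y.toFun t ω * X.Dstar t ω ∂P) + ∫ ω, X.toFun t ω * Y.D t ω ∂P) t := by
  have comm : ∀ f g : Ω → ℝ, ∫ ω, f ω * g ω ∂P = ∫ ω, g ω * f ω ∂P := fun f g =>
    integral_congr_ae (Eventually.of_forall fun ω => mul_comm _ _)
  set F : ℝ → ℝ := fun s => ∫ ω, X.toFun s ω * Y.toFun s ω ∂P with hFdef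
  set c₁ : ℝ := ∫ ω, Y.toFun t ω * X.Dstar t ω ∂P with hc₁
  set c₂ : ℝ := ∫ ω, X.toFun t ω * Y.D t ω ∂P with hc₂
  rw [hasDerivAt_iff_isLittleO, Asymptotics.isLittleO_iff]
  intro ε hε
  obtain ⟨δ₁, hδ₁, hsub₁, hU₁⟩ := unif ht Y.memL2 (Y.contL2 t (Ioo_subset_Icc_self ht))
    X.memL2_Dstar (X.contL2_Dstar t ht) (half_pos hε)
  obtain ⟨δ₂, hδ₂, hsub₂, hU₂⟩ := unif ht X.memL2 (X.contL2 t (Ioo_subset_Icc_self ht))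
    Y.memL2_D (Y.contL2_D t ht) (half_pos hε)
  set δ : ℝ := min δ₁ δ₂ with hδdef
  have hδ : 0 < δ := lt_min hδ₁ hδ₂
  have hB₁ : Icc (t - δ) (t + δ) ⊆ Icc (t - δ₁) (t + δ₁) :=
    Icc_subset_Icc (by have := min_le_left δ₁ δ₂; simp only [hδdef]; linarith)
      (by have := min_le_left δ₁ δ₂; simp only [hδdef]; linarith)
  have hB₂ : Icc (t - δ) (t + δ) ⊆ Icc (t - δ₂) (t + δ₂) :=
    Icc_subset_Icc (by have := min_le_right δ₁ δ₂; simp only [hδdef]; linarith)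
      (by have := min_le_right δ₁ δ₂; simp only [hδdef]; linarith)
  have hBIoo : Icc (t - δ) (t + δ) ⊆ Ioo a b := fun x hx => hsub₁ (hB₁ hx)
  have hBIcc : Icc (t - δ) (t + δ) ⊆ Icc a b := fun x hx => Ioo_subset_Icc_self (hBIoo hx)
  have htB : t ∈ Icc (t - δ) (t + δ) := by constructor <;> linarith
  filter_upwards [Icc_mem_nhds (by linarith : t - δ < t) (by linarith : t < t + δ)] with u hu
  have huB := hu
  rcases le_total t u with htu | htu
  · -- t ≤ u
    have hsegsub : Icc t u ⊆ Icc (t - δ) (t + δ) := Icc_subset_Icc (by linarith)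
      (by simp only [mem_Icc] at huB; linarith [huB.2])
    have hA := seg_left hF_le X (Y.memL2 u (hBIcc huB)) htu (fun x hx => hBIoo (hsegsub hx))
      (fun r hr => (Y.adapted_F u (hBIcc huB)).mono (hF_anti hr.2))
      (fun r hr => hU₁ r (hB₁ (hsegsub (Ioc_subset_Icc_self hr))) u (hB₁ huB))
    have hBseg := seg_right hP_le Y (X.memL2 t (Ioo_subset_Icc_self ht)) htu
      (fun x hx => hBIoo (hsegsub hx))
      (fun r hr => (X.adapted_P t (Ioo_subset_Icc_self ht)).mono (hP_mono hr.1))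
      (le_of_lt (half_pos hε))
      (fun r hr => hU₂ r (hB₂ (hsegsub (Ico_subset_Icc_self hr))) t (hB₂ htB))
    have e1 : ∫ ω, Y.toFun u ω * X.toFun u ω ∂P = F u := comm _ _
    have e2 : ∫ ω, Y.toFun u ω * X.toFun t ω ∂P = ∫ ω, X.toFun t ω * Y.toFun u ω ∂P :=
      comm _ _
    have e3 : ∫ ω, X.toFun t ω * Y.toFun t ω ∂P = F t := rfl
    rw [e1, e2] at hA
    rw [e3] at hBseg
    have goal_eq : F u - F t - (u - t) • (c₁ + c₂)
        = ((F u - ∫ ω, X.toFun t ω * Y.toFun u ω ∂P) - (u - t) * c₁)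
          + (((∫ ω, X.toFun t ω * Y.toFun u ω ∂P) - F t) - (u - t) * c₂) := by
      simp only [smul_eq_mul]; ring
    rw [Real.norm_eq_abs, Real.norm_eq_abs, goal_eq]
    calc |_ + _| ≤ _ := abs_add_le _ _
      _ ≤ ε / 2 * (u - t) + ε / 2 * (u - t) := add_le_add hA hBseg
      _ = ε * |u - t| := by rw [abs_of_nonneg (by linarith : (0:ℝ) ≤ u - t)]; ring
  · -- u ≤ t
    have hsegsub : Icc u t ⊆ Icc (t - δ) (t + δ) := Icc_subset_Icc
      (by simp only [mem_Icc] at huB; linarith [huB.1]) (by linarith)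
    have hA := seg_left hF_le X (Y.memL2 t (Ioo_subset_Icc_self ht)) htu
      (fun x hx => hBIoo (hsegsub hx))
      (fun r hr => (Y.adapted_F t (Ioo_subset_Icc_self ht)).mono (hF_anti hr.2))
      (fun r hr => hU₁ r (hB₁ (hsegsub (Ioc_subset_Icc_self hr))) t (hB₁ htB))
    have hBseg := seg_right hP_le Y (X.memL2 u (hBIcc huB)) htu
      (fun x hx => hBIoo (hsegsub hx))
      (fun r hr => (X.adapted_P u (hBIcc huB)).mono (hP_mono hr.1))
      (le_of_lt (half_pos hε))
      (fun r hr => hU₂ r (hB₂ (hsegsub (Ico_subset_Icc_self hr))) u (hB₂ huB))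
    have e1 : ∫ ω, Y.toFun t ω * X.toFun t ω ∂P = F t := comm _ _
    have e2 : ∫ ω, Y.toFun t ω * X.toFun u ω ∂P = ∫ ω, X.toFun u ω * Y.toFun t ω ∂P :=
      comm _ _
    have e3 : ∫ ω, X.toFun u ω * Y.toFun u ω ∂P = F u := rfl
    rw [e1, e2] at hA
    rw [e3] at hBseg
    have goal_eq : F u - F t - (u - t) • (c₁ + c₂)
        = -(((F t - ∫ ω, X.toFun u ω * Y.toFun t ω ∂P) - (t - u) * c₁)
          + (((∫ ω, X.toFun u ω * Y.toFun t ω ∂P) - F u) - (t - u) * c₂)) := by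
      simp only [smul_eq_mul]; ring
    rw [Real.norm_eq_abs, Real.norm_eq_abs, goal_eq, abs_neg]
    calc |_ + _| ≤ _ := abs_add_le _ _
      _ ≤ ε / 2 * (t - u) + ε / 2 * (t - u) := add_le_add hA hBseg
      _ = ε * |u - t| := by rw [abs_sub_comm, abs_of_nonneg (by linarith : (0:ℝ) ≤ t - u)]; ring

lemma Dc_decomp (X : S1Process P Pfil Ffil a b ℝ) (μ t : ℝ) (ω : Ω) :
    X.Dc μ t ω = (((X.D t ω + X.Dstar t ω) / 2 : ℝ) : ℂ)
      + (((μ * ((X.D t ω - X.Dstar t ω) / 2)) : ℝ) : ℂ) * Complex.I := by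
  simp only [S1Process.Dc]
  push_cast
  ring

lemma Dc_re (X : S1Process P Pfil Ffil a b ℝ) (μ t : ℝ) (ω : Ω) :
    (X.Dc μ t ω).re = (X.D t ω + X.Dstar t ω) / 2 := by
  rw [Dc_decomp]; simp

lemma Dc_im (X : S1Process P Pfil Ffil a b ℝ) (μ t : ℝ) (ω : Ω) :
    (X.Dc μ t ω).im = μ * ((X.D t ω - X.Dstar t ω) / 2) := by
  rw [Dc_decomp]; simp

end derivhelpers

/-- If `X` and `Y` are real-valued S1-processes on `I = (a,b)` and `μ = ±1`,
then for all `t ∈ I`: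
(i) `d/dt E[X(t)Y(t)] = E[Re(𝒟_μX(t))·Y(t) + X(t)·Re(𝒟_μY(t))]`, and
(ii) `E[Im(𝒟_μX(t))·Y(t)] = E[X(t)·Im(𝒟_μY(t))]`. -/
theorem nelson_complex_derivative_product_rule
    {Ω : Type*} [m0 : MeasurableSpace Ω] (P : Measure Ω) [IsProbabilityMeasure P]
    (Pfil Ffil : ℝ → MeasurableSpace Ω)
    (hP_mono : Monotone Pfil) (hP_le : ∀ t, Pfil t ≤ m0)
    (hF_anti : Antitone Ffil) (hF_le : ∀ t, Ffil t ≤ m0)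
    (a b : ℝ) (hab : a < b)
    (X Y : S1Process P Pfil Ffil a b ℝ)
    (μ : ℝ) (hμ : μ = 1 ∨ μ = -1) :
    ∀ t ∈ Set.Ioo a b,
      HasDerivAt (fun s => ∫ ω, X.toFun s ω * Y.toFun s ω ∂P)
        (∫ ω, ((X.Dc μ t ω).re * Y.toFun t ω + X.toFun t ω * (Y.Dc μ t ω).re) ∂P) t
      ∧ (∫ ω, (X.Dc μ t ω).im * Y.toFun t ω ∂P)
          = ∫ ω, X.toFun t ω * (Y.Dc μ t ω).im ∂P := by
  intro t ht
  have htI : t ∈ Icc a b := Ioo_subset_Icc_self ht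
  have k1 := key hP_mono hP_le hF_anti hF_le X Y ht
  have k2 := key hP_mono hP_le hF_anti hF_le Y X ht
  have hFeq : (fun s => ∫ ω, Y.toFun s ω * X.toFun s ω ∂P)
      = fun s => ∫ ω, X.toFun s ω * Y.toFun s ω ∂P := by
    funext s
    exact integral_congr_ae (Eventually.of_forall fun ω => mul_comm _ _)
  rw [hFeq] at k2
  set I1 : ℝ := ∫ ω, Y.toFun t ω * X.Dstar t ω ∂P with hI1
  set I2 : ℝ := ∫ ω, X.toFun t ω * Y.D t ω ∂P with hI2
  set I3 : ℝ := ∫ ω, X.toFun t ω * Y.Dstar t ω ∂P with hI3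
  set I4 : ℝ := ∫ ω, Y.toFun t ω * X.D t ω ∂P with hI4
  have huniq : I1 + I2 = I3 + I4 := k1.unique k2
  have mX : MemLp (X.toFun t) 2 P := X.memL2 t htI
  have mY : MemLp (Y.toFun t) 2 P := Y.memL2 t htI
  have mDX : MemLp (X.D t) 2 P := X.memL2_D t ht
  have mDsX : MemLp (X.Dstar t) 2 P := X.memL2_Dstar t ht
  have mDY : MemLp (Y.D t) 2 P := Y.memL2_D t ht
  have mDsY : MemLp (Y.Dstar t) 2 P := Y.memL2_Dstar t ht
  have p1 : Integrable (fun ω => X.D t ω * Y.toFun t ω) P := l2_integrable_mul mDX mY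
  have p2 : Integrable (fun ω => X.Dstar t ω * Y.toFun t ω) P := l2_integrable_mul mDsX mY
  have p3 : Integrable (fun ω => X.toFun t ω * Y.D t ω) P := l2_integrable_mul mX mDY
  have p4 : Integrable (fun ω => X.toFun t ω * Y.Dstar t ω) P := l2_integrable_mul mX mDsY
  have q1 : ∫ ω, X.D t ω * Y.toFun t ω ∂P = I4 :=
    integral_congr_ae (Eventually.of_forall fun ω => mul_comm _ _)
  have q2 : ∫ ω, X.Dstar t ω * Y.toFun t ω ∂P = I1 :=
    integral_congr_ae (Eventually.of_forall fun ω => mul_comm _ _)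
  have sAB : ∫ ω, (X.D t ω * Y.toFun t ω + X.Dstar t ω * Y.toFun t ω) ∂P
      = (∫ ω, X.D t ω * Y.toFun t ω ∂P) + ∫ ω, X.Dstar t ω * Y.toFun t ω ∂P :=
    integral_add p1 p2
  have sCD : ∫ ω, (X.toFun t ω * Y.D t ω + X.toFun t ω * Y.Dstar t ω) ∂P
      = (∫ ω, X.toFun t ω * Y.D t ω ∂P) + ∫ ω, X.toFun t ω * Y.Dstar t ω ∂P :=
    integral_add p3 p4
  have sABCD : ∫ ω, ((X.D t ω * Y.toFun t ω + X.Dstar t ω * Y.toFun t ω)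
        + (X.toFun t ω * Y.D t ω + X.toFun t ω * Y.Dstar t ω)) ∂P
      = (∫ ω, (X.D t ω * Y.toFun t ω + X.Dstar t ω * Y.toFun t ω) ∂P)
        + ∫ ω, (X.toFun t ω * Y.D t ω + X.toFun t ω * Y.Dstar t ω) ∂P :=
    integral_add (p1.add p2) (p3.add p4)
  have sSubX : ∫ ω, (X.D t ω * Y.toFun t ω - X.Dstar t ω * Y.toFun t ω) ∂P
      = (∫ ω, X.D t ω * Y.toFun t ω ∂P) - ∫ ω, X.Dstar t ω * Y.toFun t ω ∂P :=
    integral_sub p1 p2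
  have sSubY : ∫ ω, (X.toFun t ω * Y.D t ω - X.toFun t ω * Y.Dstar t ω) ∂P
      = (∫ ω, X.toFun t ω * Y.D t ω ∂P) - ∫ ω, X.toFun t ω * Y.Dstar t ω ∂P :=
    integral_sub p3 p4
  constructor
  · -- part (i)
    have shalf : (∫ ω, ((X.Dc μ t ω).re * Y.toFun t ω + X.toFun t ω * (Y.Dc μ t ω).re) ∂P)
        = (1 / 2) * ∫ ω, ((X.D t ω * Y.toFun t ω + X.Dstar t ω * Y.toFun t ω)
            + (X.toFun t ω * Y.D t ω + X.toFun t ω * Y.Dstar t ω)) ∂P := by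
      rw [← integral_const_mul]
      refine integral_congr_ae (Eventually.of_forall fun ω => ?_)
      simp only [Dc_re]
      ring
    have hT2 : (∫ ω, ((X.Dc μ t ω).re * Y.toFun t ω + X.toFun t ω * (Y.Dc μ t ω).re) ∂P)
        = I1 + I2 := by
      rw [shalf, sABCD, sAB, sCD, q1, q2, ← hI2, ← hI3]
      linarith [huniq]
    rw [hT2]
    exact k1
  · -- part (ii)
    have hL : (∫ ω, (X.Dc μ t ω).im * Y.toFun t ω ∂P)
        = (μ / 2) * ∫ ω, (X.D t ω * Y.toFun t ω - X.Dstar t ω * Y.toFun t ω) ∂P := by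
      rw [← integral_const_mul]
      refine integral_congr_ae (Eventually.of_forall fun ω => ?_)
      simp only [Dc_im]
      ring
    have hR : (∫ ω, X.toFun t ω * (Y.Dc μ t ω).im ∂P)
        = (μ / 2) * ∫ ω, (X.toFun t ω * Y.D t ω - X.toFun t ω * Y.Dstar t ω) ∂P := by
      rw [← integral_const_mul]
      refine integral_congr_ae (Eventually.of_forall fun ω => ?_)
      simp only [Dc_im]
      ring
    rw [hL, hR, sSubX, sSubY, q1, q2, ← hI2, ← hI3]
    have h : I4 - I1 = I2 - I3 := by linarith [huniq]
    rw [h]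
end
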